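/- arXiv:1106.5130 — 5 statements merged into one kernel-verified Lean document; each statement's English description precedes it below -/
import Mathlib

section
/- For any probability distribution P over the positive integers, the function α ↦ H_α(P) is continuous at every point of its region of convergence R(P) (as a function restricted to R(P)). -/
open Filter Topology
open scoped ENNReal

/-- A probability distribution over the positive integers (indexed by `ℕ`):
nonnegative masses summing to `1`. -/
def IsProbDist (p : ℕ → ℝ) : Prop :=
  (∀ n, 0 ≤ p n) ∧ HasSum p 1

/-- The sum `∑ pₙ^α`, computed in `[0,∞]`, with the convention `0^0 = 0`. -/
noncomputable def renyiSum (p : ℕ → ℝ) (α : ℝ) : ℝ≥0∞ :=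
  ∑' n, if p n = 0 then 0 else ENNReal.ofReal (p n ^ α)

/-- The Shannon entropy `H₁(P) = -∑ pₙ log pₙ`, valued in `[0,∞]`. -/
noncomputable def shannonEntropy (p : ℕ → ℝ) : ℝ≥0∞ :=
  ∑' n, ENNReal.ofReal (-(p n * Real.log (p n)))

/-- The Rényi entropy `H_α(P)`, valued in `[0,∞]`: for `α ≠ 1` it is
`(1/(1-α)) log ∑ pₙ^α` (equal to `∞` when the sum diverges), and for `α = 1`
it is the Shannon entropy. -/
noncomputable def renyiEntropy (p : ℕ → ℝ) (α : ℝ) : ℝ≥0∞ :=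
  if α = 1 then shannonEntropy p
  else if renyiSum p α = ∞ then ∞
  else ENNReal.ofReal ((1 - α)⁻¹ * Real.log (renyiSum p α).toReal)

/-- The region of convergence `R(P) = {α ≥ 0 : H_α(P) < ∞}`. -/
def convRegion (p : ℕ → ℝ) : Set ℝ :=
  {α : ℝ | 0 ≤ α ∧ renyiEntropy p α < ∞}

/-- The critical exponent `α_c(P) = inf {α ≥ 0 : H_α(P) < ∞}`. -/
noncomputable def criticalExponent (p : ℕ → ℝ) : ℝ :=
  sInf (convRegion p)

/-- The total variation distance `d_TV(P,Q) = ∑ |pₙ - qₙ|`. -/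
noncomputable def dTV (p q : ℕ → ℝ) : ℝ :=
  ∑' n, |p n - q n|

namespace Stmt2Aux

/-- the real-valued summand -/
noncomputable def F (p : ℕ → ℝ) (α : ℝ) (n : ℕ) : ℝ :=
  if p n = 0 then 0 else p n ^ α

/-- `ℓ n = -(p n log p n)` -/
noncomputable def ell (p : ℕ → ℝ) (n : ℕ) : ℝ := -(p n * Real.log (p n))

variable {p : ℕ → ℝ}

theorem F_nonneg (hp : ∀ n, 0 ≤ p n) (α : ℝ) (n : ℕ) : 0 ≤ F p α n := by
  unfold F; split
  · exact le_rfl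
  · exact Real.rpow_nonneg (hp n) α

theorem F_one (hp : ∀ n, 0 ≤ p n) : F p 1 = p := by
  funext n; unfold F; split
  · simp_all
  · exact Real.rpow_one _

theorem F_anti (hp : ∀ n, 0 ≤ p n) (hp1 : ∀ n, p n ≤ 1) {α β : ℝ} (h : β ≤ α) (n : ℕ) :
    F p α n ≤ F p β n := by
  unfold F; split
  · exact le_rfl
  · exact Real.rpow_le_rpow_of_exponent_ge (lt_of_le_of_ne (hp n) (Ne.symm ‹_›)) (hp1 n) h

theorem summable_F_of_le (hp : ∀ n, 0 ≤ p n) (hp1 : ∀ n, p n ≤ 1) {α β : ℝ}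
    (hβ : Summable (F p β)) (h : β ≤ α) : Summable (F p α) :=
  Summable.of_nonneg_of_le (F_nonneg hp α) (F_anti hp hp1 h) hβ

theorem renyiSum_eq (p : ℕ → ℝ) (α : ℝ) :
    renyiSum p α = ∑' n, ENNReal.ofReal (F p α n) := by
  unfold renyiSum F
  congr 1; funext n; split <;> simp

theorem tsum_ofReal_ne_top_iff {f : ℕ → ℝ} (hf : ∀ n, 0 ≤ f n) :
    (∑' n, ENNReal.ofReal (f n)) ≠ ∞ ↔ Summable f := by
  constructor
  · intro h
    have := ENNReal.summable_toReal h
    refine this.congr fun n => ?_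
    rw [ENNReal.toReal_ofReal (hf n)]
  · intro h
    rw [← ENNReal.ofReal_tsum_of_nonneg hf h]
    exact ENNReal.ofReal_ne_top

theorem tsum_ofReal_toReal {f : ℕ → ℝ} (hf : ∀ n, 0 ≤ f n) (h : Summable f) :
    (∑' n, ENNReal.ofReal (f n)).toReal = ∑' n, f n := by
  rw [← ENNReal.ofReal_tsum_of_nonneg hf h, ENNReal.toReal_ofReal (tsum_nonneg hf)]

theorem renyiSum_ne_top_iff (hp : ∀ n, 0 ≤ p n) (α : ℝ) :
    renyiSum p α ≠ ∞ ↔ Summable (F p α) := by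
  rw [renyiSum_eq]; exact tsum_ofReal_ne_top_iff (F_nonneg hp α)

theorem renyiSum_toReal (hp : ∀ n, 0 ≤ p n) {α : ℝ} (h : Summable (F p α)) :
    (renyiSum p α).toReal = ∑' n, F p α n := by
  rw [renyiSum_eq]; exact tsum_ofReal_toReal (F_nonneg hp α) h

theorem cont_const_rpow {a : ℝ} (h : a ≠ 0) : Continuous fun x : ℝ => a ^ x :=
  continuous_iff_continuousAt.2 fun _ => Real.continuousAt_const_rpow h

theorem p_le_one (hp : ∀ n, 0 ≤ p n) (hs : HasSum p 1) (n : ℕ) : p n ≤ 1 :=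
  le_hasSum hs n fun j _ => hp j

theorem exists_pos (hs : HasSum p 1) (hp : ∀ n, 0 ≤ p n) : ∃ n, 0 < p n := by
  by_contra h
  push_neg at h
  have hz : p = fun _ => (0 : ℝ) := funext fun n => le_antisymm (h n) (hp n)
  rw [hz] at hs
  simpa using hs.unique hasSum_zero

theorem T_pos (hp : ∀ n, 0 ≤ p n) (hs : HasSum p 1) {α : ℝ} (h : Summable (F p α)) :
    0 < ∑' n, F p α n := by
  obtain ⟨n, hn⟩ := exists_pos hs hp
  refine Summable.tsum_pos h (F_nonneg hp α) n ?_
  unfold F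
  rw [if_neg hn.ne']
  exact Real.rpow_pos_of_pos hn α

theorem T_contOn (hp : ∀ n, 0 ≤ p n) (hp1 : ∀ n, p n ≤ 1) {β : ℝ} (hβ : Summable (F p β)) :
    ContinuousOn (fun α => ∑' n, F p α n) (Set.Ici β) := by
  refine continuousOn_tsum (fun n => ?_) hβ (fun n α hα => ?_)
  · unfold F
    split
    · exact continuousOn_const
    · exact (cont_const_rpow ‹_›).continuousOn
  · rw [Real.norm_of_nonneg (F_nonneg hp _ _)]
    exact F_anti hp hp1 hα n

theorem rpow_neg_log_le {q δ : ℝ} (hq0 : 0 ≤ q) (hq1 : q ≤ 1) (hδ : 0 < δ) :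
    q ^ δ * (-Real.log q) ≤ 1 / δ := by
  rcases eq_or_lt_of_le hq0 with h | h
  · rw [← h, Real.zero_rpow hδ.ne', zero_mul]
    positivity
  · have hr : 0 < q ^ δ := Real.rpow_pos_of_pos h δ
    have hlog : -Real.log (q ^ δ) ≤ 1 / q ^ δ - 1 := by
      have := Real.log_le_sub_one_of_pos (x := (q ^ δ)⁻¹) (by positivity)
      rw [Real.log_inv] at this
      linarith [this, (by rw [one_div] : 1 / q ^ δ = (q ^ δ)⁻¹)]
    have hlogeq : Real.log (q ^ δ) = δ * Real.log q := Real.log_rpow h δ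
    have h1 : q ^ δ * (-Real.log q) = (1/δ) * (q ^ δ * (-Real.log (q ^ δ))) := by
      rw [hlogeq]; field_simp
    rw [h1]
    have h2 : q ^ δ * (-Real.log (q ^ δ)) ≤ q ^ δ * (1 / q ^ δ - 1) :=
      mul_le_mul_of_nonneg_left hlog hr.le
    have h3 : q ^ δ * (1 / q ^ δ - 1) = 1 - q ^ δ := by field_simp
    have h4 : q ^ δ * (-Real.log (q ^ δ)) ≤ 1 := by
      refine h2.trans ?_
      rw [h3]; linarith
    calc (1/δ) * (q ^ δ * (-Real.log (q ^ δ))) ≤ (1/δ) * 1 :=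
          mul_le_mul_of_nonneg_left h4 (by positivity)
      _ = 1/δ := mul_one _

theorem FL_bound (hp : ∀ n, 0 ≤ p n) (hp1 : ∀ n, p n ≤ 1) {α β β' : ℝ}
    (hβ : β < β') (hα : β' ≤ α) (n : ℕ) :
    F p α n * (-Real.log (p n)) ≤ (1 / (β' - β)) * F p β n := by
  set δ := β' - β with hδdef
  have hδ : 0 < δ := by simp [hδdef]; linarith
  unfold F
  split
  · simp
  · have hpn : 0 < p n := lt_of_le_of_ne (hp n) (Ne.symm ‹_›)
    have hL : 0 ≤ -Real.log (p n) := by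
      rw [neg_nonneg]
      exact Real.log_nonpos (hp n) (hp1 n)
    have h1 : p n ^ α * (-Real.log (p n)) ≤ p n ^ β' * (-Real.log (p n)) :=
      mul_le_mul_of_nonneg_right (Real.rpow_le_rpow_of_exponent_ge hpn (hp1 n) hα) hL
    have h2 : p n ^ β' = p n ^ β * p n ^ δ := by
      rw [← Real.rpow_add hpn]; congr 1; simp [hδdef]
    have h3 : p n ^ β' * (-Real.log (p n)) = p n ^ β * (p n ^ δ * (-Real.log (p n))) := by
      rw [h2]; ring
    refine h1.trans ?_
    rw [h3, mul_comm (1/δ) _]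
    exact mul_le_mul_of_nonneg_left (rpow_neg_log_le (hp n) (hp1 n) hδ)
      (Real.rpow_nonneg (hp n) β)

theorem FL_nonneg (hp : ∀ n, 0 ≤ p n) (hp1 : ∀ n, p n ≤ 1) (α : ℝ) (n : ℕ) :
    0 ≤ F p α n * (-Real.log (p n)) := by
  refine mul_nonneg (F_nonneg hp _ _) ?_
  by_cases hz : p n = 0
  · simp [hz]
  · rw [neg_nonneg]
    exact Real.log_nonpos (hp n) (hp1 n)

theorem G_contOn (hp : ∀ n, 0 ≤ p n) (hp1 : ∀ n, p n ≤ 1) {β β' : ℝ}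
    (hβ : Summable (F p β)) (hββ' : β < β') :
    ContinuousOn (fun α => ∑' n, F p α n * (-Real.log (p n))) (Set.Ici β') := by
  refine continuousOn_tsum (f := fun n α => F p α n * (-Real.log (p n)))
    (u := fun n => (1 / (β' - β)) * F p β n) (fun n => ?_) (hβ.mul_left _) (fun n α hα => ?_)
  · show ContinuousOn (fun α => (if p n = 0 then 0 else p n ^ α) * -Real.log (p n)) (Set.Ici β')
    by_cases hz : p n = 0
    · simpa [hz] using continuousOn_const
    · simp only [if_neg hz]
      exact ((cont_const_rpow hz).mul continuous_const).continuousOn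
  · rw [Real.norm_of_nonneg (FL_nonneg hp hp1 α n)]
    exact FL_bound hp hp1 hββ' hα n

theorem G_one (hp : ∀ n, 0 ≤ p n) :
    (fun n => F p 1 n * (-Real.log (p n))) = ell p := by
  funext n
  rw [F_one hp]
  show p n * (-Real.log (p n)) = -(p n * Real.log (p n))
  ring

theorem ell_nonneg (hp : ∀ n, 0 ≤ p n) (hp1 : ∀ n, p n ≤ 1) (n : ℕ) : 0 ≤ ell p n := by
  unfold ell
  rw [neg_nonneg]
  exact mul_nonpos_of_nonneg_of_nonpos (hp n) (Real.log_nonpos (hp n) (hp1 n))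

theorem summable_plog (hℓ : Summable (ell p)) :
    Summable fun n => p n * Real.log (p n) := by
  simpa [ell] using hℓ.neg

theorem jensen_lb (hp : ∀ n, 0 ≤ p n) (hs : HasSum p 1) (hℓ : Summable (ell p))
    {α : ℝ} (hα : Summable (F p α)) :
    (1 - α) * (∑' n, ell p n) ≤ Real.log (∑' n, F p α n) := by
  set H := ∑' n, ell p n with hH
  set m := (1 - α) * H with hm
  have key : ∀ n, Real.exp m * (p n + p n * ((α - 1) * Real.log (p n)) - m * p n) ≤ F p α n := by
    intro n
    unfold F
    by_cases hz : p n = 0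
    · simp [hz]
    · rw [if_neg hz]
      have hpn : 0 < p n := lt_of_le_of_ne (hp n) (Ne.symm hz)
      set y := (α - 1) * Real.log (p n) with hy
      have hF : p n ^ α = p n * Real.exp y := by
        rw [Real.rpow_def_of_pos hpn, hy]
        rw [← Real.exp_log hpn, ← Real.exp_add]
        congr 1
        rw [Real.log_exp]
        ring
      rw [hF]
      have h1 : (y - m) + 1 ≤ Real.exp (y - m) := Real.add_one_le_exp _
      have h2 : Real.exp m * Real.exp (y - m) = Real.exp y := by
        rw [← Real.exp_add]; congr 1; ring
      calc Real.exp m * (p n + p n * y - m * p n)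
          = p n * (Real.exp m * ((y - m) + 1)) := by ring
        _ ≤ p n * (Real.exp m * Real.exp (y - m)) := by
            refine mul_le_mul_of_nonneg_left (mul_le_mul_of_nonneg_left h1 ?_) (hp n)
            positivity
        _ = p n * Real.exp y := by rw [h2]
  have hplog := summable_plog hℓ
  have hsum1 : Summable fun n => p n + p n * ((α - 1) * Real.log (p n)) - m * p n := by
    have h1 : Summable fun n => p n * ((α - 1) * Real.log (p n)) := by
      simpa [mul_comm, mul_assoc, mul_left_comm] using hplog.mul_left (α - 1)
    exact (hs.summable.add h1).sub (hs.summable.mul_left m)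
  have htsum1 : (∑' n, (p n + p n * ((α - 1) * Real.log (p n)) - m * p n)) = 1 := by
    have h1 : Summable fun n => p n * ((α - 1) * Real.log (p n)) := by
      simpa [mul_comm, mul_assoc, mul_left_comm] using hplog.mul_left (α - 1)
    rw [Summable.tsum_sub (hs.summable.add h1) (hs.summable.mul_left m),
        Summable.tsum_add hs.summable h1]
    have hpt : ∑' n, p n = 1 := hs.tsum_eq
    have h2 : (∑' n, p n * ((α - 1) * Real.log (p n))) = m := by
      have h3 : (∑' n, p n * ((α - 1) * Real.log (p n)))
           = (α - 1) * ∑' n, p n * Real.log (p n) := by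
        rw [← tsum_mul_left]
        congr 1; funext n; ring
      rw [h3]
      have hHeq : (∑' n, p n * Real.log (p n)) = -H := by
        rw [hH]
        rw [← tsum_neg]
        congr 1; funext n; simp [ell]
      rw [hHeq, hm]; ring
    rw [h2, tsum_mul_left, hpt]
    ring
  have hle : Real.exp m ≤ ∑' n, F p α n := by
    have := Summable.tsum_le_tsum key (hsum1.mul_left (Real.exp m)) hα
    rwa [tsum_mul_left, htsum1, mul_one] at this
  show m ≤ Real.log (∑' n, F p α n)
  exact (Real.le_log_iff_exp_le (T_pos hp hs hα)).2 hle

theorem log_ub (hp : ∀ n, 0 ≤ p n) (hp1 : ∀ n, p n ≤ 1) (hs : HasSum p 1)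
    {α : ℝ} (hα1 : α ≤ 1) (hα : Summable (F p α))
    (hG : Summable fun n => F p α n * (-Real.log (p n))) :
    Real.log (∑' n, F p α n) ≤ (1 - α) * ∑' n, F p α n * (-Real.log (p n)) := by
  have hT := T_pos hp hs hα
  have h1 : Real.log (∑' n, F p α n) ≤ (∑' n, F p α n) - 1 :=
    Real.log_le_sub_one_of_pos hT
  have h2 : (∑' n, F p α n) - 1 = ∑' n, (F p α n - p n) := by
    rw [Summable.tsum_sub hα hs.summable, hs.tsum_eq]
  have key : ∀ n, F p α n - p n ≤ (1 - α) * (F p α n * (-Real.log (p n))) := by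
    intro n
    unfold F
    by_cases hz : p n = 0
    · simp [hz]
    · rw [if_neg hz]
      have hpn : 0 < p n := lt_of_le_of_ne (hp n) (Ne.symm hz)
      set s := (1 - α) * (-Real.log (p n)) with hsdef
      have hs0 : 0 ≤ s := by
        refine mul_nonneg (by linarith) ?_
        rw [neg_nonneg]
        exact Real.log_nonpos (hp n) (hp1 n)
      have hF : p n ^ α = p n * Real.exp s := by
        rw [Real.rpow_def_of_pos hpn, hsdef]
        rw [← Real.exp_log hpn, ← Real.exp_add]
        congr 1
        rw [Real.log_exp]
        ring
      rw [hF]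
      have h3 : Real.exp s - 1 ≤ s * Real.exp s := by
        have h4 : (-s) + 1 ≤ Real.exp (-s) := Real.add_one_le_exp _
        have h5 : Real.exp (-s) * Real.exp s = 1 := by
          rw [← Real.exp_add]; simp
        nlinarith [Real.exp_pos s, Real.exp_pos (-s)]
      calc p n * Real.exp s - p n = p n * (Real.exp s - 1) := by ring
        _ ≤ p n * (s * Real.exp s) := mul_le_mul_of_nonneg_left h3 (hp n)
        _ = (1 - α) * (p n * Real.exp s * (-Real.log (p n))) := by rw [hsdef]; ring
  have h6 : (∑' n, (F p α n - p n)) ≤ ∑' n, (1 - α) * (F p α n * (-Real.log (p n))) :=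
    Summable.tsum_le_tsum key (hα.sub hs.summable) (hG.mul_left _)
  rw [tsum_mul_left] at h6
  linarith [h1, h2 ▸ h1, h6, h2]

theorem summable_F_one (hp : ∀ n, 0 ≤ p n) (hs : HasSum p 1) : Summable (F p 1) := by
  rw [F_one hp]; exact hs.summable

theorem summable_F_of_one_le (hp : ∀ n, 0 ≤ p n) (hp1 : ∀ n, p n ≤ 1) (hs : HasSum p 1)
    {α : ℝ} (h : 1 ≤ α) : Summable (F p α) :=
  summable_F_of_le hp hp1 (summable_F_one hp hs) h

/-- truncated comparison function -/
noncomputable def phi (p : ℕ → ℝ) (N : ℕ) (t : ℝ) : ℝ :=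
  (∑ n ∈ Finset.range N, p n * Real.exp (t * Real.log (p n)))
    + (1 - ∑ n ∈ Finset.range N, p n)

theorem phi_zero (N : ℕ) : phi p N 0 = 1 := by
  simp [phi]

theorem phi_cont (N : ℕ) : Continuous (phi p N) := by
  refine Continuous.add ?_ continuous_const
  refine continuous_finset_sum _ fun n _ => ?_
  exact continuous_const.mul ((continuous_id.mul continuous_const).rexp)

theorem phi_hasDeriv (N : ℕ) :
    HasDerivAt (phi p N) (∑ n ∈ Finset.range N, p n * Real.log (p n)) 0 := by
  have h : ∀ n ∈ Finset.range N,
      HasDerivAt (fun t => p n * Real.exp (t * Real.log (p n))) (p n * Real.log (p n)) 0 := by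
    intro n _
    have h1 : HasDerivAt (fun t : ℝ => t * Real.log (p n)) (Real.log (p n)) 0 :=
      hasDerivAt_mul_const _
    have h2 := h1.exp
    simp only [zero_mul, Real.exp_zero, mul_one] at h2
    simpa using h2.const_mul (p n)
  have hsum := HasDerivAt.fun_sum h
  exact hsum.add_const _

theorem log_phi_tendsto (N : ℕ) :
    Tendsto (fun t => Real.log (phi p N t) / t) (𝓝[≠] (0:ℝ))
      (𝓝 (-(∑ n ∈ Finset.range N, ell p n))) := by
  have h0 : phi p N 0 = 1 := phi_zero N
  have hlog : HasDerivAt (fun t => Real.log (phi p N t))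
      (∑ n ∈ Finset.range N, p n * Real.log (p n)) 0 := by
    have := (phi_hasDeriv (p := p) N).log (by rw [h0]; norm_num)
    simpa [h0] using this
  have hslope := hasDerivAt_iff_tendsto_slope.1 hlog
  have heq : (∑ n ∈ Finset.range N, p n * Real.log (p n))
      = -(∑ n ∈ Finset.range N, ell p n) := by
    simp [ell]
  rw [heq] at hslope
  refine hslope.congr' ?_
  filter_upwards [self_mem_nhdsWithin] with t ht
  rw [slope_def_field]
  rw [h0, Real.log_one]
  ring

theorem T_le_phi (hp : ∀ n, 0 ≤ p n) (hp1 : ∀ n, p n ≤ 1) (hs : HasSum p 1) (N : ℕ)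
    {α : ℝ} (h1α : 1 ≤ α) :
    (∑' n, F p α n) ≤ phi p N (α - 1) := by
  have hα : Summable (F p α) := summable_F_of_one_le hp hp1 hs h1α
  have hsplit : (∑ n ∈ Finset.range N, F p α n) + (∑' n, F p α (n + N)) = ∑' n, F p α n :=
    Summable.sum_add_tsum_nat_add N hα
  have hhead : ∀ n ∈ Finset.range N,
      F p α n ≤ p n * Real.exp ((α - 1) * Real.log (p n)) := by
    intro n _
    unfold F
    by_cases hz : p n = 0
    · simp [hz]
    · rw [if_neg hz]
      have hpn : 0 < p n := lt_of_le_of_ne (hp n) (Ne.symm hz)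
      rw [Real.rpow_def_of_pos hpn]
      rw [← Real.exp_log hpn, ← Real.exp_add]
      refine le_of_eq ?_
      congr 1
      rw [Real.log_exp]
      ring
  have htail : (∑' n, F p α (n + N)) ≤ 1 - ∑ n ∈ Finset.range N, p n := by
    have hps : Summable fun n => p (n + N) := by
      rw [summable_nat_add_iff]
      exact hs.summable
    have hFs : Summable fun n => F p α (n + N) := by
      rw [summable_nat_add_iff]
      exact hα
    have h2 : (∑' n, F p α (n + N)) ≤ ∑' n, p (n + N) := by
      refine Summable.tsum_le_tsum (fun n => ?_) hFs hps
      have := F_anti hp hp1 h1α (n + N)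
      rwa [F_one hp] at this
    have h3 : (∑ n ∈ Finset.range N, p n) + (∑' n, p (n + N)) = 1 := by
      rw [Summable.sum_add_tsum_nat_add N hs.summable, hs.tsum_eq]
    linarith
  calc (∑' n, F p α n) = (∑ n ∈ Finset.range N, F p α n) + (∑' n, F p α (n + N)) :=
        hsplit.symm
    _ ≤ (∑ n ∈ Finset.range N, p n * Real.exp ((α - 1) * Real.log (p n)))
        + (1 - ∑ n ∈ Finset.range N, p n) := by
        refine add_le_add (Finset.sum_le_sum hhead) htail
    _ = phi p N (α - 1) := rfl

/-- Right-hand limit of the real Rényi entropy at `1`. -/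
theorem tendsto_hfun_right (hp : ∀ n, 0 ≤ p n) (hp1 : ∀ n, p n ≤ 1) (hs : HasSum p 1)
    (hℓ : Summable (ell p)) :
    Tendsto (fun α => (1 - α)⁻¹ * Real.log (∑' n, F p α n)) (𝓝[>] (1:ℝ))
      (𝓝 (∑' n, ell p n)) := by
  set H := ∑' n, ell p n with hH
  rw [tendsto_order]
  constructor
  · intro a ha
    have htd : Tendsto (fun N => ∑ n ∈ Finset.range N, ell p n) atTop (𝓝 H) :=
      hℓ.hasSum.tendsto_sum_nat
    obtain ⟨N, hN⟩ := (htd.eventually (eventually_gt_nhds ha)).exists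
    set A := ∑ n ∈ Finset.range N, ell p n with hA
    have hsub : Tendsto (fun α : ℝ => α - 1) (𝓝[>] (1:ℝ)) (𝓝[≠] (0:ℝ)) := by
      refine tendsto_nhdsWithin_of_tendsto_nhds_of_eventually_within _ ?_ ?_
      · have h0 : Tendsto (fun α : ℝ => α - 1) (𝓝 (1:ℝ)) (𝓝 0) := by
          simpa using ((continuous_sub_right (1:ℝ)).tendsto (1:ℝ) :
            Tendsto (fun α : ℝ => α - 1) (𝓝 1) (𝓝 (1 - 1)))
        exact h0.mono_left nhdsWithin_le_nhds
      · filter_upwards [self_mem_nhdsWithin] with α hα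
        simp only [Set.mem_compl_iff, Set.mem_singleton_iff]
        have h1 : (1:ℝ) < α := hα
        intro hc
        rw [sub_eq_zero] at hc
        exact absurd hc.symm (ne_of_gt h1).symm
    have hψ : Tendsto (fun α => -(Real.log (phi p N (α - 1)) / (α - 1))) (𝓝[>] (1:ℝ))
        (𝓝 A) := by
      have := ((log_phi_tendsto (p := p) N).comp hsub).neg
      simpa using this
    have hφpos : ∀ᶠ α in 𝓝[>] (1:ℝ), 0 < phi p N (α - 1) := by
      have hc : Tendsto (fun α : ℝ => phi p N (α - 1)) (𝓝 (1:ℝ)) (𝓝 1) := by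
        have hpc := (phi_cont (p := p) N).tendsto 0
        have h2 : Tendsto (fun α : ℝ => α - 1) (𝓝 (1:ℝ)) (𝓝 0) := by
          simpa using ((continuous_sub_right (1:ℝ)).tendsto (1:ℝ) :
            Tendsto (fun α : ℝ => α - 1) (𝓝 1) (𝓝 (1 - 1)))
        have := hpc.comp h2
        simpa [phi_zero, Function.comp_def] using this
      exact (hc.mono_left nhdsWithin_le_nhds).eventually (eventually_gt_nhds one_pos)
    filter_upwards [self_mem_nhdsWithin, hψ.eventually (eventually_gt_nhds hN), hφpos]
      with α hα hψα hφα
    have h1α : (1:ℝ) < α := hα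
    have hαsum : Summable (F p α) := summable_F_of_one_le hp hp1 hs h1α.le
    have hT := T_pos hp hs hαsum
    have hTφ := T_le_phi hp hp1 hs N h1α.le
    have hlog : Real.log (∑' n, F p α n) ≤ Real.log (phi p N (α - 1)) :=
      (Real.log_le_log_iff hT hφα).2 hTφ
    have hα1 : (0:ℝ) < α - 1 := by linarith
    have hdiv : Real.log (∑' n, F p α n) / (α - 1) ≤ Real.log (phi p N (α - 1)) / (α - 1) :=
      (div_le_div_iff_of_pos_right hα1).2 hlog
    have heq : (1 - α)⁻¹ * Real.log (∑' n, F p α n)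
        = -(Real.log (∑' n, F p α n) / (α - 1)) := by
      rw [div_eq_mul_inv, show (1:ℝ) - α = -(α - 1) by ring, inv_neg]
      ring
    rw [heq]
    calc a < -(Real.log (phi p N (α - 1)) / (α - 1)) := hψα
      _ ≤ -(Real.log (∑' n, F p α n) / (α - 1)) := neg_le_neg hdiv
  · intro b hb
    filter_upwards [self_mem_nhdsWithin] with α hα
    have h1α : (1:ℝ) < α := hα
    have hαsum : Summable (F p α) := summable_F_of_one_le hp hp1 hs h1α.le
    have hj := jensen_lb hp hs hℓ hαsum
    have hinv : (1 - α)⁻¹ < 0 := inv_lt_zero.2 (by linarith)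
    have hmul := mul_le_mul_of_nonpos_left hj hinv.le
    have hne : (1:ℝ) - α ≠ 0 := by
      intro hc; rw [sub_eq_zero] at hc; exact absurd hc.symm (by linarith)
    rw [← mul_assoc, inv_mul_cancel₀ hne, one_mul] at hmul
    exact lt_of_le_of_lt hmul hb

/-- region membership facts -/
theorem summable_of_mem (hp : ∀ n, 0 ≤ p n) {α : ℝ} (hα : α ∈ convRegion p) (h1 : α ≠ 1) :
    Summable (F p α) := by
  have h := hα.2
  rw [renyiEntropy, if_neg h1] at h
  by_contra hc
  have : renyiSum p α = ∞ := by
    by_contra h2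
    exact hc ((renyiSum_ne_top_iff hp α).1 h2)
  rw [if_pos this] at h
  exact absurd h (lt_irrefl _)

theorem entropy_eq (hp : ∀ n, 0 ≤ p n) {α : ℝ} (h1 : α ≠ 1) (hα : Summable (F p α)) :
    renyiEntropy p α = ENNReal.ofReal ((1 - α)⁻¹ * Real.log (∑' n, F p α n)) := by
  rw [renyiEntropy, if_neg h1, if_neg ((renyiSum_ne_top_iff hp α).2 hα),
    renyiSum_toReal hp hα]

theorem shannon_ne_top_iff (hp : ∀ n, 0 ≤ p n) (hp1 : ∀ n, p n ≤ 1) :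
    shannonEntropy p ≠ ∞ ↔ Summable (ell p) :=
  tsum_ofReal_ne_top_iff (ell_nonneg hp hp1)

theorem shannon_eq (hp : ∀ n, 0 ≤ p n) (hp1 : ∀ n, p n ≤ 1) (hℓ : Summable (ell p)) :
    shannonEntropy p = ENNReal.ofReal (∑' n, ell p n) := by
  rw [shannonEntropy]
  exact (ENNReal.ofReal_tsum_of_nonneg (ell_nonneg hp hp1) hℓ).symm

/-- continuity at a point `≠ 1` -/
theorem contWithinAt_Ici (hp : ∀ n, 0 ≤ p n) (hp1 : ∀ n, p n ≤ 1) (hs : HasSum p 1)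
    {β α₀ : ℝ} (hβ : Summable (F p β)) (hβα : β ≤ α₀) (h1 : α₀ ≠ 1) :
    ContinuousWithinAt (renyiEntropy p) (Set.Ici β) α₀ := by
  have hα₀ : Summable (F p α₀) := summable_F_of_le hp hp1 hβ hβα
  have hTc : ContinuousWithinAt (fun α => ∑' n, F p α n) (Set.Ici β) α₀ :=
    (T_contOn hp hp1 hβ) α₀ hβα
  have hTpos := T_pos hp hs hα₀
  have hlog : ContinuousWithinAt (fun α => Real.log (∑' n, F p α n)) (Set.Ici β) α₀ :=
    ContinuousAt.comp_continuousWithinAt (g := Real.log)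
      (f := fun α => ∑' n, F p α n) (Real.continuousAt_log hTpos.ne') hTc
  have hinv : ContinuousAt (fun α : ℝ => (1 - α)⁻¹) α₀ := by
    have hc : ContinuousAt (fun α : ℝ => 1 - α) α₀ :=
      (continuous_const.sub continuous_id).continuousAt
    refine hc.inv₀ ?_
    intro hc2
    rw [sub_eq_zero] at hc2
    exact h1 hc2.symm
  have hmul : ContinuousWithinAt (fun α => (1 - α)⁻¹ * Real.log (∑' n, F p α n))
      (Set.Ici β) α₀ := hinv.continuousWithinAt.mul hlog
  have hof : ContinuousWithinAt
      (fun α => ENNReal.ofReal ((1 - α)⁻¹ * Real.log (∑' n, F p α n))) (Set.Ici β) α₀ :=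
    ContinuousAt.comp_continuousWithinAt (g := ENNReal.ofReal)
      (f := fun α => (1 - α)⁻¹ * Real.log (∑' n, F p α n))
      ENNReal.continuous_ofReal.continuousAt hmul
  refine hof.congr_of_eventuallyEq ?_ ?_
  · have hne : {α : ℝ | α ≠ 1} ∈ 𝓝[Set.Ici β] α₀ :=
      nhdsWithin_le_nhds (compl_singleton_mem_nhds h1)
    filter_upwards [hne, self_mem_nhdsWithin] with α hα1 hαβ
    exact entropy_eq hp hα1 (summable_F_of_le hp hp1 hβ hαβ)
  · exact entropy_eq hp h1 hα₀

/-- left-hand limit at 1 within the region -/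
theorem tendsto_left (hp : ∀ n, 0 ≤ p n) (hp1 : ∀ n, p n ≤ 1) (hs : HasSum p 1)
    (hℓ : Summable (ell p)) {β : ℝ} (hβR : β ∈ convRegion p) (hβ1 : β < 1) :
    Tendsto (renyiEntropy p) (𝓝[convRegion p ∩ Set.Iio 1] (1:ℝ))
      (𝓝 (ENNReal.ofReal (∑' n, ell p n))) := by
  set H := ∑' n, ell p n with hH
  have hβsum : Summable (F p β) := summable_of_mem hp hβR (by linarith)
  set β' := (β + 1) / 2 with hβ'
  have hββ' : β < β' := by rw [hβ']; linarith
  have hβ'1 : β' < 1 := by rw [hβ']; linarith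
  set s := convRegion p ∩ Set.Iio 1 with hsdef
  have hmem : Set.Ioi β' ∈ 𝓝 (1:ℝ) := isOpen_Ioi.mem_nhds hβ'1
  rw [nhdsWithin_restrict' s hmem]
  -- G tendsto
  have hGc : Tendsto (fun α => ∑' n, F p α n * (-Real.log (p n)))
      (𝓝[s ∩ Set.Ioi β'] (1:ℝ)) (𝓝 H) := by
    have hcont := (G_contOn hp hp1 hβsum hββ') 1 (Set.mem_Ici.2 hβ'1.le)
    have hG1 : (∑' n, F p 1 n * (-Real.log (p n))) = H := by
      rw [hH]; congr 1; exact G_one hp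
    have hsub2 : s ∩ Set.Ioi β' ⊆ Set.Ici β' := fun x hx => Set.mem_Ici.2 (le_of_lt hx.2)
    have h2 : Tendsto (fun α => ∑' n, F p α n * (-Real.log (p n))) (𝓝[s ∩ Set.Ioi β'] 1)
        (𝓝 (∑' n, F p 1 n * (-Real.log (p n)))) := hcont.mono_left (nhdsWithin_mono _ hsub2)
    rwa [hG1] at h2
  -- bounds
  have hbounds : ∀ α ∈ s ∩ Set.Ioi β', α ≠ 1 →
      H ≤ (1 - α)⁻¹ * Real.log (∑' n, F p α n) ∧
      (1 - α)⁻¹ * Real.log (∑' n, F p α n) ≤ ∑' n, F p α n * (-Real.log (p n)) := by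
    intro α hα hα1
    have hαR : α ∈ convRegion p := hα.1.1
    have hαlt1 : α < 1 := hα.1.2
    have hαβ' : β' < α := hα.2
    have hαsum : Summable (F p α) := summable_of_mem hp hαR hα1
    have hGsum : Summable fun n => F p α n * (-Real.log (p n)) := by
      refine Summable.of_nonneg_of_le (FL_nonneg hp hp1 α) (FL_bound hp hp1 hββ' hαβ'.le)
        (hβsum.mul_left _)
    have hpos : (0:ℝ) < 1 - α := by linarith
    constructor
    · have hj := jensen_lb hp hs hℓ hαsum
      have := mul_le_mul_of_nonneg_left hj (inv_nonneg.2 hpos.le)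
      rwa [← mul_assoc, inv_mul_cancel₀ hpos.ne', one_mul] at this
    · have hu := log_ub hp hp1 hs hαlt1.le hαsum hGsum
      have := mul_le_mul_of_nonneg_left hu (inv_nonneg.2 hpos.le)
      rwa [← mul_assoc, inv_mul_cancel₀ hpos.ne', one_mul] at this
  -- real tendsto by squeeze
  have hreal : Tendsto (fun α => (1 - α)⁻¹ * Real.log (∑' n, F p α n))
      (𝓝[s ∩ Set.Ioi β'] (1:ℝ)) (𝓝 H) := by
    refine tendsto_of_tendsto_of_tendsto_of_le_of_le' tendsto_const_nhds hGc ?_ ?_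
    · filter_upwards [self_mem_nhdsWithin] with α hα
      exact (hbounds α hα (ne_of_lt hα.1.2)).1
    · filter_upwards [self_mem_nhdsWithin] with α hα
      exact (hbounds α hα (ne_of_lt hα.1.2)).2
  have hof := (ENNReal.continuous_ofReal.tendsto H).comp hreal
  refine Tendsto.congr' ?_ hof
  filter_upwards [self_mem_nhdsWithin] with α hα
  exact (entropy_eq hp (ne_of_lt hα.1.2) (summable_of_mem hp hα.1.1 (ne_of_lt hα.1.2))).symm

/-- right-hand limit of the entropy at 1 -/
theorem tendsto_right' (hp : ∀ n, 0 ≤ p n) (hp1 : ∀ n, p n ≤ 1) (hs : HasSum p 1)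
    (hℓ : Summable (ell p)) :
    Tendsto (renyiEntropy p) (𝓝[>] (1:ℝ)) (𝓝 (ENNReal.ofReal (∑' n, ell p n))) := by
  have hof := (ENNReal.continuous_ofReal.tendsto _).comp (tendsto_hfun_right hp hp1 hs hℓ)
  refine Tendsto.congr' ?_ hof
  filter_upwards [self_mem_nhdsWithin] with α hα
  have h1α : (1:ℝ) < α := hα
  exact (entropy_eq hp (ne_of_gt h1α) (summable_F_of_one_le hp hp1 hs h1α.le)).symm

end Stmt2Aux

open Stmt2Aux

/-- For any probability distribution `P`, the function
`α ↦ H_α(P)` is continuous at every point of `R(P)`, as a function restricted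
to `R(P)`. -/
theorem stmt2 (p : ℕ → ℝ) (hp : IsProbDist p) :
    ContinuousOn (fun α : ℝ => renyiEntropy p α) (convRegion p) := by
  obtain ⟨hp0, hs⟩ := hp
  have hp1 : ∀ n, p n ≤ 1 := p_le_one hp0 hs
  intro α₀ hα₀
  rcases lt_trichotomy α₀ 1 with hlt | heq | hgt
  · -- α₀ < 1
    by_cases hex : ∃ β ∈ convRegion p, β < α₀
    · obtain ⟨β, hβR, hβα⟩ := hex
      have hβsum : Summable (F p β) := summable_of_mem hp0 hβR (by linarith)
      have h := contWithinAt_Ici hp0 hp1 hs hβsum hβα.le (ne_of_lt hlt)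
      have hIci : Set.Ici β ∈ 𝓝 α₀ := Ici_mem_nhds hβα
      exact (h.continuousAt hIci).continuousWithinAt
    · push_neg at hex
      have hsub : convRegion p ⊆ Set.Ici α₀ := fun γ hγ => hex γ hγ
      have hα₀sum : Summable (F p α₀) := summable_of_mem hp0 hα₀ (ne_of_lt hlt)
      exact (contWithinAt_Ici hp0 hp1 hs hα₀sum le_rfl (ne_of_lt hlt)).mono hsub
  · -- α₀ = 1
    subst heq
    have hsh : shannonEntropy p ≠ ∞ := by
      have := hα₀.2
      rw [renyiEntropy, if_pos rfl] at this
      exact this.ne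
    have hℓ : Summable (ell p) := (shannon_ne_top_iff hp0 hp1).1 hsh
    have hval : renyiEntropy p 1 = ENNReal.ofReal (∑' n, ell p n) := by
      rw [renyiEntropy, if_pos rfl, shannon_eq hp0 hp1 hℓ]
    show Tendsto (fun α => renyiEntropy p α) (𝓝[convRegion p] 1) (𝓝 (renyiEntropy p 1))
    rw [hval]
    have hsubset : convRegion p ⊆ (convRegion p ∩ Set.Iio 1) ∪ ({1} ∪ Set.Ioi 1) := by
      intro x hx
      rcases lt_trichotomy x 1 with h | h | h
      · exact Or.inl ⟨hx, h⟩
      · exact Or.inr (Or.inl h)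
      · exact Or.inr (Or.inr h)
    refine Tendsto.mono_left ?_ (nhdsWithin_mono _ hsubset)
    rw [nhdsWithin_union, nhdsWithin_union]
    rw [tendsto_sup]
    constructor
    · -- left part
      by_cases hne : ∃ β ∈ convRegion p, β < 1
      · obtain ⟨β, hβR, hβ1⟩ := hne
        exact tendsto_left hp0 hp1 hs hℓ hβR hβ1
      · push_neg at hne
        have hempty : convRegion p ∩ Set.Iio 1 = ∅ := by
          ext x
          simp only [Set.mem_inter_iff, Set.mem_Iio, Set.mem_empty_iff_false, iff_false]
          rintro ⟨hx1, hx2⟩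
          exact absurd hx2 (not_lt.2 (hne x hx1))
        rw [hempty, nhdsWithin_empty]
        exact tendsto_bot
    · rw [tendsto_sup]
      constructor
      · rw [nhdsWithin_singleton]
        have := tendsto_pure_nhds (fun α => renyiEntropy p α) (1:ℝ)
        rwa [hval] at this
      · exact tendsto_right' hp0 hp1 hs hℓ
  · -- α₀ > 1
    set β := (1 + α₀) / 2 with hβ
    have h1β : (1:ℝ) ≤ β := by rw [hβ]; linarith
    have hβα : β < α₀ := by rw [hβ]; linarith
    have hβsum : Summable (F p β) := summable_F_of_one_le hp0 hp1 hs h1β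
    have h := contWithinAt_Ici hp0 hp1 hs hβsum hβα.le (ne_of_gt hgt)
    have hIci : Set.Ici β ∈ 𝓝 α₀ := Ici_mem_nhds hβα
    exact (h.continuousAt hIci).continuousWithinAt
end

section
/- Let P be a probability distribution over the positive integers with critical exponent α_c = α_c(P). If H_{α_c}(P) = ∞, then lim_{α→α_c+} H_α(P) = ∞, i.e. H_α(P) tends to infinity as α decreases to the critical exponent. -/
open Filter Topology
open scoped ENNReal

/-- If `H_{α_c}(P) = ∞` at the critical exponent `α_c = α_c(P)`,
then `H_α(P) → ∞` as `α` decreases to `α_c`. -/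
theorem stmt3 (p : ℕ → ℝ) (hp : IsProbDist p)
    (hdiv : renyiEntropy p (criticalExponent p) = ∞) :
    Tendsto (fun α : ℝ => renyiEntropy p α)
      (𝓝[>] (criticalExponent p)) (𝓝 ∞) := by
  obtain ⟨hp0, hp1⟩ := hp
  have hple : ∀ n, p n ≤ 1 := fun n => le_hasSum hp1 n (fun m _ => hp0 m)
  have hαc0 : 0 ≤ criticalExponent p := Real.sInf_nonneg (fun x hx => hx.1)
  rw [ENNReal.tendsto_nhds_top_iff_nat]
  intro N
  rcases eq_or_ne (criticalExponent p) 1 with h1 | h1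
  · -- Case α_c = 1 : Shannon entropy is infinite
    rw [h1]
    have hsh : shannonEntropy p = ∞ := by
      rw [h1, renyiEntropy, if_pos rfl] at hdiv; exact hdiv
    have hterm : ∀ n, 0 ≤ -(p n * Real.log (p n)) := by
      intro n
      have h := mul_nonneg (hp0 n) (neg_nonneg.mpr (Real.log_nonpos (hp0 n) (hple n)))
      rw [mul_neg] at h; exact h
    -- find a finite set with Shannon mass > N+1
    obtain ⟨F, hFgt⟩ : ∃ F : Finset ℕ, (N : ℝ) + 1 < ∑ n ∈ F, (-(p n * Real.log (p n))) := by
      by_contra hcon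
      push_neg at hcon
      have hle : shannonEntropy p ≤ ENNReal.ofReal ((N : ℝ) + 1) := by
        rw [shannonEntropy, ENNReal.tsum_eq_iSup_sum]
        refine iSup_le fun G => ?_
        rw [← ENNReal.ofReal_sum_of_nonneg (fun i _ => hterm i)]
        exact ENNReal.ofReal_le_ofReal (hcon G)
      rw [hsh] at hle
      exact (lt_irrefl _ (lt_of_le_of_lt hle ENNReal.ofReal_lt_top))
    -- slope sum tends to the Shannon partial sum
    have hslope : Tendsto
        (fun α : ℝ => ∑ n ∈ F, (p n - (if p n = 0 then 0 else p n ^ α)) / (α - 1))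
        (𝓝[>] (1 : ℝ)) (𝓝 (∑ n ∈ F, (-(p n * Real.log (p n))))) := by
      refine tendsto_finset_sum _ fun n _ => ?_
      by_cases hpn : p n = 0
      · simpa [hpn] using (tendsto_const_nhds :
          Tendsto (fun _ : ℝ => (0 : ℝ)) (𝓝[>] (1 : ℝ)) (𝓝 0))
      · have hpos : 0 < p n := (hp0 n).lt_of_ne (Ne.symm hpn)
        have hd : HasDerivAt (fun x : ℝ => p n ^ x) (p n ^ (1 : ℝ) * Real.log (p n)) 1 :=
          (Real.hasStrictDerivAt_const_rpow hpos 1).hasDerivAt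
        have hs := (hasDerivAt_iff_tendsto_slope.mp hd).neg
        rw [Real.rpow_one] at hs
        have heq : (fun α : ℝ => -slope (fun x : ℝ => p n ^ x) 1 α)
            = fun α : ℝ => (p n - p n ^ α) / (α - 1) := by
          funext α; rw [slope_def_field, Real.rpow_one]; ring
        rw [heq] at hs
        have hs2 := hs.mono_left
          (nhdsWithin_mono _ (fun x hx => Set.mem_compl_singleton_iff.mpr (ne_of_gt hx)))
        simp only [hpn, if_false]; exact hs2
    have hev1 := Tendsto.eventually_const_lt hFgt hslope
    filter_upwards [hev1, self_mem_nhdsWithin] with α hα hα1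
    have hα1' : (1 : ℝ) < α := hα1
    have hαne : α ≠ 1 := ne_of_gt hα1'
    have hα1pos : 0 < α - 1 := sub_pos.mpr hα1'
    set q : ℕ → ℝ := fun n => if p n = 0 then 0 else p n ^ α with hq
    have hq0 : ∀ n, 0 ≤ q n := by
      intro n; by_cases h : p n = 0 <;> simp [hq, h, Real.rpow_nonneg (hp0 n)]
    have hqle : ∀ n, q n ≤ p n := by
      intro n
      by_cases h : p n = 0
      · simp [hq, h]
      · have hpos : 0 < p n := (hp0 n).lt_of_ne (Ne.symm h)
        have := Real.rpow_le_rpow_of_exponent_ge hpos (hple n) (le_of_lt hα1')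
        rw [Real.rpow_one] at this
        simpa [hq, h] using this
    have hqsum : Summable q := Summable.of_nonneg_of_le hq0 hqle hp1.summable
    have hterm_eq : ∀ n, (if p n = 0 then (0 : ℝ≥0∞) else ENNReal.ofReal (p n ^ α))
        = ENNReal.ofReal (q n) := by
      intro n; by_cases h : p n = 0 <;> simp [hq, h]
    have hrs : renyiSum p α = ENNReal.ofReal (∑' n, q n) := by
      rw [renyiSum, ENNReal.ofReal_tsum_of_nonneg hq0 hqsum]
      exact tsum_congr hterm_eq
    set S := ∑' n, q n with hS
    have hS0 : 0 ≤ S := tsum_nonneg hq0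
    obtain ⟨n0, hn0⟩ : ∃ n, p n ≠ 0 := by
      by_contra hall
      push_neg at hall
      have ht := hp1.tsum_eq
      simp [hall] at ht
    have hn0pos : 0 < p n0 := (hp0 n0).lt_of_ne (Ne.symm hn0)
    have hSpos : 0 < S := by
      have h1 : 0 < q n0 := by simp [hq, hn0, Real.rpow_pos_of_pos hn0pos]
      exact lt_of_lt_of_le h1 (Summable.le_tsum hqsum n0 (fun m _ => hq0 m))
    have hsub : ∑' n, (p n - q n) = 1 - S := by
      rw [Summable.tsum_sub hp1.summable hqsum, hp1.tsum_eq]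
    have hFsum : ∑ n ∈ F, (p n - q n) ≤ 1 - S := by
      rw [← hsub]
      exact Summable.sum_le_tsum F (fun n _ => sub_nonneg.mpr (hqle n)) (hp1.summable.sub hqsum)
    have hkey : (N : ℝ) + 1 < (1 - S) / (α - 1) := by
      calc (N : ℝ) + 1 < ∑ n ∈ F, (p n - q n) / (α - 1) := hα
        _ = (∑ n ∈ F, (p n - q n)) / (α - 1) := by rw [Finset.sum_div]
        _ ≤ (1 - S) / (α - 1) := (div_le_div_iff_of_pos_right hα1pos).mpr hFsum
    have hrsne : renyiSum p α ≠ ∞ := by rw [hrs]; exact ENNReal.ofReal_ne_top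
    rw [renyiEntropy, if_neg hαne, if_neg hrsne, hrs, ENNReal.toReal_ofReal hS0]
    have hlog : Real.log S ≤ S - 1 := Real.log_le_sub_one_of_pos hSpos
    have h1α : (1 : ℝ) - α ≠ 0 := by intro h; apply hαne; linarith
    have hα1ne : α - 1 ≠ 0 := ne_of_gt hα1pos
    have heqx : (1 - α)⁻¹ * Real.log S = (-Real.log S) / (α - 1) := by
      field_simp
      ring
    have hx : (N : ℝ) + 1 < (1 - α)⁻¹ * Real.log S := by
      rw [heqx]
      refine lt_of_lt_of_le hkey ?_
      exact (div_le_div_iff_of_pos_right hα1pos).mpr (by linarith)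
    calc (N : ℝ≥0∞) = ENNReal.ofReal (N : ℝ) := (ENNReal.ofReal_natCast N).symm
      _ < ENNReal.ofReal ((1 - α)⁻¹ * Real.log S) :=
        (ENNReal.ofReal_lt_ofReal_iff_of_nonneg (Nat.cast_nonneg N)).mpr (by linarith)
  · -- Case α_c ≠ 1 : the Rényi sum at α_c diverges
    have hsum : renyiSum p (criticalExponent p) = ∞ := by
      rw [renyiEntropy, if_neg h1] at hdiv
      by_cases h : renyiSum p (criticalExponent p) = ∞
      · exact h
      · rw [if_neg h] at hdiv
        exact absurd hdiv ENNReal.ofReal_ne_top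
    have hclt1 : criticalExponent p < 1 := by
      rcases lt_or_gt_of_ne h1 with h | h
      · exact h
      · exfalso
        have hle : renyiSum p (criticalExponent p) ≤ ∑' n, ENNReal.ofReal (p n) := by
          refine ENNReal.tsum_le_tsum fun n => ?_
          by_cases hn : p n = 0
          · simp [hn]
          · have hpos : 0 < p n := (hp0 n).lt_of_ne (Ne.symm hn)
            rw [if_neg hn]
            refine ENNReal.ofReal_le_ofReal ?_
            have := Real.rpow_le_rpow_of_exponent_ge hpos (hple n) (le_of_lt h)
            rwa [Real.rpow_one] at this
        have h2 : (∑' n, ENNReal.ofReal (p n)) = 1 := by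
          rw [← ENNReal.ofReal_tsum_of_nonneg hp0 hp1.summable, hp1.tsum_eq, ENNReal.ofReal_one]
        rw [h2, hsum] at hle
        exact absurd hle (by simp)
    obtain ⟨F, hF⟩ : ∃ F : Finset ℕ, ENNReal.ofReal (Real.exp ((N : ℝ) + 1))
        < ∑ n ∈ F, (if p n = 0 then (0 : ℝ≥0∞) else ENNReal.ofReal (p n ^ (criticalExponent p))) := by
      rw [renyiSum, ENNReal.tsum_eq_iSup_sum] at hsum
      exact lt_iSup_iff.mp (by rw [hsum]; exact ENNReal.ofReal_lt_top)
    have hsum_eq : ∀ β : ℝ,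
        (∑ n ∈ F, (if p n = 0 then (0 : ℝ≥0∞) else ENNReal.ofReal (p n ^ β)))
          = ENNReal.ofReal (∑ n ∈ F, (if p n = 0 then 0 else p n ^ β)) := by
      intro β
      rw [ENNReal.ofReal_sum_of_nonneg]
      · refine Finset.sum_congr rfl fun n _ => ?_
        by_cases h : p n = 0 <;> simp [h]
      · intro n _
        by_cases h : p n = 0 <;> simp [h, Real.rpow_nonneg (hp0 n)]
    have hTc : Real.exp ((N : ℝ) + 1) < ∑ n ∈ F, (if p n = 0 then 0 else p n ^ (criticalExponent p)) := by
      rw [hsum_eq] at hF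
      exact (ENNReal.ofReal_lt_ofReal_iff_of_nonneg (Real.exp_nonneg _)).mp hF
    have hcont : Tendsto (fun β : ℝ => ∑ n ∈ F, (if p n = 0 then 0 else p n ^ β))
        (𝓝 (criticalExponent p))
        (𝓝 (∑ n ∈ F, (if p n = 0 then 0 else p n ^ (criticalExponent p)))) := by
      refine tendsto_finset_sum _ fun n _ => ?_
      by_cases h : p n = 0
      · simpa [h] using (tendsto_const_nhds :
          Tendsto (fun _ : ℝ => (0 : ℝ)) (𝓝 (criticalExponent p)) (𝓝 0))
      · have hpos : 0 < p n := (hp0 n).lt_of_ne (Ne.symm h)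
        simp only [h, if_false]
        have heq : (fun β : ℝ => p n ^ β) = fun β => Real.exp (Real.log (p n) * β) := by
          funext β; rw [Real.rpow_def_of_pos hpos]
        rw [heq, Real.rpow_def_of_pos hpos]
        exact ((Real.continuous_exp.comp (continuous_const.mul continuous_id)).tendsto _)
    have hev : ∀ᶠ β in 𝓝 (criticalExponent p),
        Real.exp ((N : ℝ) + 1) < ∑ n ∈ F, (if p n = 0 then 0 else p n ^ β) :=
      Tendsto.eventually_const_lt hTc hcont
    have hev2 : ∀ᶠ β in 𝓝 (criticalExponent p), β < 1 := eventually_lt_nhds hclt1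
    filter_upwards [hev.filter_mono nhdsWithin_le_nhds, hev2.filter_mono nhdsWithin_le_nhds,
      self_mem_nhdsWithin] with β hβT hβ1 hβc
    have hβc' : criticalExponent p < β := hβc
    have hβ0 : 0 ≤ β := le_trans hαc0 (le_of_lt hβc')
    have hβne : β ≠ 1 := ne_of_lt hβ1
    rw [renyiEntropy, if_neg hβne]
    by_cases hrs : renyiSum p β = ∞
    · rw [if_pos hrs]
      exact ENNReal.natCast_lt_top N
    · rw [if_neg hrs]
      have hT0 : 0 ≤ ∑ n ∈ F, (if p n = 0 then 0 else p n ^ β) := by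
        refine Finset.sum_nonneg fun n _ => ?_
        by_cases h : p n = 0 <;> simp [h, Real.rpow_nonneg (hp0 n)]
      have hle : ENNReal.ofReal (∑ n ∈ F, (if p n = 0 then 0 else p n ^ β)) ≤ renyiSum p β := by
        rw [← hsum_eq β, renyiSum]
        exact Summable.sum_le_tsum F (fun n _ => zero_le) ENNReal.summable
      have hTle : (∑ n ∈ F, (if p n = 0 then 0 else p n ^ β)) ≤ (renyiSum p β).toReal := by
        have h := ENNReal.toReal_mono hrs hle
        rwa [ENNReal.toReal_ofReal hT0] at h
      have hSgt : Real.exp ((N : ℝ) + 1) < (renyiSum p β).toReal := lt_of_lt_of_le hβT hTle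
      have hlog : (N : ℝ) + 1 ≤ Real.log (renyiSum p β).toReal := by
        calc (N : ℝ) + 1 = Real.log (Real.exp ((N : ℝ) + 1)) := (Real.log_exp _).symm
          _ ≤ _ := Real.log_le_log (Real.exp_pos _) (le_of_lt hSgt)
      have h1b : 0 < 1 - β := by linarith
      have hinv : 1 ≤ (1 - β)⁻¹ := (one_le_inv₀ h1b).mpr (by linarith)
      have hx : (N : ℝ) + 1 ≤ (1 - β)⁻¹ * Real.log (renyiSum p β).toReal := by
        calc (N : ℝ) + 1 ≤ Real.log (renyiSum p β).toReal := hlog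
          _ = 1 * Real.log (renyiSum p β).toReal := (one_mul _).symm
          _ ≤ (1 - β)⁻¹ * Real.log (renyiSum p β).toReal :=
            mul_le_mul_of_nonneg_right hinv (by linarith)
      calc (N : ℝ≥0∞) = ENNReal.ofReal (N : ℝ) := (ENNReal.ofReal_natCast N).symm
        _ < ENNReal.ofReal ((1 - β)⁻¹ * Real.log (renyiSum p β).toReal) :=
          (ENNReal.ofReal_lt_ofReal_iff_of_nonneg (Nat.cast_nonneg N)).mpr (by linarith)
end

section
/- Let β > 1 and let P = (p_1, p_2, …) be a probability distribution over the positive integers such that lim_{n→∞} p_n/(n^{−β}(log n)^{−2β}) exists and lies in (0, ∞). Then α_c(P) = 1/β and R(P) = [1/β, ∞); in particular H_{1/β}(P) < ∞ while H_α(P) = ∞ for all α < 1/β. -/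
set_option maxHeartbeats 1000000


open Filter Topology Real
open scoped ENNReal

lemma aux_tsum_ne_top {F G : ℕ → ℝ≥0∞} (hF : ∀ n, F n ≠ ∞)
    (hG : ∑' n, G n ≠ ∞) (h : ∀ᶠ n in atTop, F n ≤ G n) : ∑' n, F n ≠ ∞ := by
  obtain ⟨N, hN⟩ := eventually_atTop.1 h
  have h1 : ∑' n, F n = (∑ i ∈ Finset.range N, F i) + ∑' n, F (n + N) :=
    (Summable.sum_add_tsum_nat_add' (ENNReal.summable)).symm
  have h2 : ∑' n, F (n + N) ≤ ∑' n, G (n + N) :=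
    ENNReal.tsum_le_tsum fun n => hN (n + N) (Nat.le_add_left _ _)
  have h3 : ∑' n, G (n + N) ≤ ∑' n, G n := by
    rw [← Summable.sum_add_tsum_nat_add' (ENNReal.summable (f := fun n => G (n + N)))]
    exact le_add_self
  rw [h1]
  exact ENNReal.add_ne_top.2 ⟨(ENNReal.sum_lt_top.2 fun i _ => (hF i).lt_top).ne,
    (lt_of_le_of_lt (h2.trans h3) hG.lt_top).ne⟩

lemma aux_tsum_eq_top {F G : ℕ → ℝ≥0∞} (hGf : ∀ n, G n ≠ ∞)
    (hG : ∑' n, G n = ∞) (h : ∀ᶠ n in atTop, G n ≤ F n) : ∑' n, F n = ∞ := by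
  by_contra hne
  exact (aux_tsum_ne_top hGf hne h) hG

lemma aux_ofReal_tsum_eq_top {f : ℕ → ℝ} (hf : ∀ n, 0 ≤ f n) (h : ¬ Summable f) :
    ∑' n, ENNReal.ofReal (f n) = ∞ := by
  by_contra hne
  refine h ((ENNReal.summable_toReal hne).congr fun n => ?_)
  exact ENNReal.toReal_ofReal (hf n)

lemma aux_ofReal_tsum_ne_top {f : ℕ → ℝ} (hf : ∀ n, 0 ≤ f n) (h : Summable f) :
    ∑' n, ENNReal.ofReal (f n) ≠ ∞ := by
  rw [← ENNReal.ofReal_tsum_of_nonneg hf h]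
  exact ENNReal.ofReal_ne_top

lemma bertrand_summable :
    Summable (fun n : ℕ => (n : ℝ) ^ (-1 : ℝ) * Real.log n ^ (-2 : ℝ)) := by
  set g : ℕ → ℝ := fun n => (max (n:ℝ) 2 * Real.log (max (n:ℝ) 2) ^ 2)⁻¹ with hg
  have hgpos : ∀ n : ℕ, 0 < max (n:ℝ) 2 * Real.log (max (n:ℝ) 2) ^ 2 := by
    intro n
    have h2 : (2:ℝ) ≤ max (n:ℝ) 2 := le_max_right _ _
    have hlog : 0 < Real.log (max (n:ℝ) 2) := Real.log_pos (by linarith)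
    have h0 : (0:ℝ) < max (n:ℝ) 2 := by linarith
    exact mul_pos h0 (pow_pos hlog 2)
  have hmono : ∀ ⦃m n : ℕ⦄, 0 < m → m ≤ n → g n ≤ g m := by
    intro m n _ hmn
    have hle : max (m:ℝ) 2 ≤ max (n:ℝ) 2 :=
      max_le_max (by exact_mod_cast hmn) le_rfl
    have h2m : (2:ℝ) ≤ max (m:ℝ) 2 := le_max_right _ _
    have hlogm : (0:ℝ) ≤ Real.log (max (m:ℝ) 2) := Real.log_nonneg (by linarith)
    have hlogle : Real.log (max (m:ℝ) 2) ≤ Real.log (max (n:ℝ) 2) :=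
      Real.log_le_log (by linarith) hle
    have hsq : Real.log (max (m:ℝ) 2) ^ 2 ≤ Real.log (max (n:ℝ) 2) ^ 2 :=
      pow_le_pow_left₀ hlogm hlogle 2
    exact inv_anti₀ (hgpos m) (mul_le_mul hle hsq (by positivity) (by linarith))
  have hnonneg : ∀ n, 0 ≤ g n := fun n => (inv_pos.2 (hgpos n)).le
  have hcond : Summable (fun k : ℕ => (2:ℝ) ^ k * g (2 ^ k)) := by
    rw [← summable_nat_add_iff 1]
    have hbase : Summable (fun k : ℕ => (Real.log 2 ^ 2)⁻¹ * ((k:ℝ) ^ (-2 : ℝ))) :=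
      (Real.summable_nat_rpow.mpr (by norm_num)).mul_left _
    rw [← summable_nat_add_iff 1] at hbase
    refine hbase.congr fun k => ?_
    have h2 : (2:ℝ) ≤ (2:ℝ) ^ (k + 1) := by
      calc (2:ℝ) = 2 ^ 1 := by norm_num
      _ ≤ 2 ^ (k+1) := pow_le_pow_right₀ (by norm_num) (by omega)
    have hmax : max (((2:ℕ) ^ (k + 1) : ℕ):ℝ) 2 = (2:ℝ) ^ (k + 1) := by
      push_cast
      exact max_eq_left h2
    have hlog : Real.log ((2:ℝ) ^ (k + 1)) = ((k:ℝ) + 1) * Real.log 2 := by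
      rw [Real.log_pow]; push_cast; ring
    have hk1 : ((k:ℝ) + 1) ^ (-2:ℝ) = (((k:ℝ)+1)^2)⁻¹ := by
      rw [Real.rpow_neg (by positivity), Real.rpow_two]
    simp only [g, hmax, hlog]
    push_cast
    rw [hk1]
    have h2pos : (0:ℝ) < (2:ℝ) ^ (k+1) := by positivity
    have hl2 : Real.log 2 ≠ 0 := (Real.log_pos one_lt_two).ne'
    have hk0 : ((k:ℝ) + 1) ≠ 0 := by positivity
    field_simp
  have hsg : Summable g := (summable_condensed_iff_of_nonneg hnonneg hmono).1 hcond
  rw [← summable_nat_add_iff 2]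
  rw [← summable_nat_add_iff 2] at hsg
  refine hsg.congr fun n => ?_
  have hmax : max (((n:ℕ) + 2 : ℕ):ℝ) 2 = (n:ℝ) + 2 := by
    push_cast
    exact max_eq_left (by linarith [Nat.cast_nonneg (α := ℝ) n])
  have hnpos : (0:ℝ) < ((n:ℝ) + 2) := by positivity
  have hlogpos : 0 < Real.log ((n:ℝ) + 2) :=
    Real.log_pos (by linarith [Nat.cast_nonneg (α := ℝ) n])
  simp only [g, hmax]
  push_cast
  rw [Real.rpow_neg hnpos.le, Real.rpow_one, Real.rpow_neg hlogpos.le,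
    Real.rpow_two, mul_inv]

/-- eventually `(n:ℝ) ≥ 1` and `log n ≥ 1`. -/
lemma aux_ev_log : ∀ᶠ n : ℕ in atTop, (1:ℝ) ≤ (n:ℝ) ∧ 1 ≤ Real.log n := by
  filter_upwards [eventually_atTop.2 ⟨3, fun n hn => hn⟩] with n hn
  have h3 : (3:ℝ) ≤ (n:ℝ) := by exact_mod_cast hn
  constructor
  · linarith
  · rw [Real.le_log_iff_exp_le (by linarith)]
    have := Real.exp_one_lt_d9
    linarith

lemma lemA {β : ℝ} (hβ : 1 < β) {p : ℕ → ℝ} (hp0 : ∀ n, 0 ≤ p n) {C : ℝ} (hC : 0 < C)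
    (hub : ∀ᶠ n in atTop, p n ≤ C * ((n:ℝ) ^ (-β) * Real.log n ^ (-(2*β))))
    {α : ℝ} (hα : 1/β ≤ α) : renyiSum p α ≠ ∞ := by
  have hβ0 : (0:ℝ) < β := by linarith
  have hα0 : 0 ≤ α := le_trans (by positivity) hα
  have hαβ : 1 ≤ α * β := (div_le_iff₀ hβ0).1 hα
  refine aux_tsum_ne_top (G := fun n =>
      ENNReal.ofReal (C ^ α * ((n : ℝ) ^ (-1 : ℝ) * Real.log n ^ (-2 : ℝ))))
    (fun n => by split <;> simp) ?_ ?_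
  · exact aux_ofReal_tsum_ne_top
      (fun n => by
        have := Real.log_natCast_nonneg n
        positivity)
      (bertrand_summable.mul_left _)
  · filter_upwards [hub, aux_ev_log] with n hn ⟨hn1, hlog1⟩
    split
    · exact zero_le
    · apply ENNReal.ofReal_le_ofReal
      have hq1 : (0:ℝ) ≤ (n:ℝ) ^ (-β) := rpow_nonneg (by positivity) _
      have hq2 : (0:ℝ) ≤ Real.log n ^ (-(2*β)) := rpow_nonneg (by linarith) _
      calc p n ^ α ≤ (C * ((n:ℝ) ^ (-β) * Real.log n ^ (-(2*β)))) ^ α :=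
            Real.rpow_le_rpow (hp0 n) hn hα0
        _ = C ^ α * (((n:ℝ) ^ (-β)) ^ α * (Real.log n ^ (-(2*β))) ^ α) := by
            rw [Real.mul_rpow hC.le (by positivity), Real.mul_rpow hq1 hq2]
        _ ≤ C ^ α * ((n : ℝ) ^ (-1 : ℝ) * Real.log n ^ (-2 : ℝ)) := by
            have e1 : ((n:ℝ) ^ (-β)) ^ α = (n:ℝ) ^ (-β * α) := by
              rw [← Real.rpow_mul (by positivity)]
            have e2 : (Real.log n ^ (-(2*β))) ^ α = Real.log n ^ (-(2*β) * α) := by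
              rw [← Real.rpow_mul (by linarith)]
            rw [e1, e2]
            have i1 : (n:ℝ) ^ (-β * α) ≤ (n : ℝ) ^ (-1 : ℝ) :=
              Real.rpow_le_rpow_of_exponent_le hn1 (by nlinarith)
            have i2 : Real.log n ^ (-(2*β) * α) ≤ Real.log n ^ (-2 : ℝ) :=
              Real.rpow_le_rpow_of_exponent_le hlog1 (by nlinarith)
            have h1 := Real.rpow_nonneg (x := Real.log n) (by linarith : (0:ℝ) ≤ Real.log n) (-(2*β) * α)
            have h2 := Real.rpow_nonneg (x := (n:ℝ)) (by positivity) (-1 : ℝ)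
            have hCα : (0:ℝ) ≤ C ^ α := Real.rpow_nonneg hC.le _
            exact mul_le_mul_of_nonneg_left (mul_le_mul i1 i2 h1 h2) hCα
lemma lemB {β : ℝ} (hβ : 1 < β) {p : ℕ → ℝ} (hp0 : ∀ n, 0 ≤ p n) {c : ℝ} (hc : 0 < c)
    (hlb : ∀ᶠ n : ℕ in atTop, c * ((n:ℝ) ^ (-β) * Real.log n ^ (-(2*β))) ≤ p n)
    {α : ℝ} (hα0 : 0 ≤ α) (hα : α < 1/β) : renyiSum p α = ∞ := by
  have hβ0 : (0:ℝ) < β := by linarith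
  have hαβ : α * β < 1 := (lt_div_iff₀ hβ0).1 hα
  have hαβ0 : 0 ≤ α * β := by positivity
  set s : ℝ := (α * β + 1) / 2 with hs
  have hs1 : α * β < s := by rw [hs]; linarith
  have hs2 : s < 1 := by rw [hs]; linarith
  have hs0 : 0 < s := by rw [hs]; linarith
  have hcα : (0:ℝ) < c ^ α := Real.rpow_pos_of_pos hc _
  -- littleO bound : eventually (log n)^(2βα) ≤ n^(s - αβ)
  have hlo : ∀ᶠ x : ℝ in atTop, ‖Real.log x ^ (2*β*α)‖ ≤ 1 * ‖x ^ (s - α*β)‖ :=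
    (isLittleO_log_rpow_rpow_atTop (2*β*α) (by linarith : 0 < s - α*β)).def one_pos
  have hlon : ∀ᶠ n : ℕ in atTop, ‖Real.log (n:ℝ) ^ (2*β*α)‖ ≤ 1 * ‖(n:ℝ) ^ (s - α*β)‖ :=
    tendsto_natCast_atTop_atTop.eventually hlo
  apply aux_tsum_eq_top (G := fun n => ENNReal.ofReal (c ^ α * (n:ℝ) ^ (-s)))
    (fun n => ENNReal.ofReal_ne_top)
  · apply aux_ofReal_tsum_eq_top
    · intro n
      have := Real.rpow_nonneg (Nat.cast_nonneg (α := ℝ) n) (-s)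
      positivity
    · intro hsum
      have h2 := (hsum.mul_left ((c ^ α)⁻¹)).congr
        (fun n => by rw [inv_mul_cancel_left₀ hcα.ne'])
      have := Real.summable_nat_rpow.mp h2
      linarith
  · filter_upwards [hlb, aux_ev_log, hlon] with n hn ⟨hn1, hlog1⟩ hbd
    have hn0 : (0:ℝ) < (n:ℝ) := by linarith
    have hlog0 : (0:ℝ) < Real.log n := by linarith
    have hq1 : (0:ℝ) < (n:ℝ) ^ (-β) := Real.rpow_pos_of_pos hn0 _
    have hq2 : (0:ℝ) < Real.log n ^ (-(2*β)) := Real.rpow_pos_of_pos hlog0 _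
    have hppos : 0 < p n := lt_of_lt_of_le (by positivity) hn
    -- main inequality chain
    have key : c ^ α * (n:ℝ) ^ (-s) ≤ p n ^ α := by
      have step1 : (c * ((n:ℝ) ^ (-β) * Real.log n ^ (-(2*β)))) ^ α ≤ p n ^ α :=
        Real.rpow_le_rpow (by positivity) hn hα0
      have e0 : (c * ((n:ℝ) ^ (-β) * Real.log n ^ (-(2*β)))) ^ α
          = c ^ α * ((n:ℝ) ^ (-β * α) * Real.log n ^ (-(2*β) * α)) := by
        rw [Real.mul_rpow hc.le (by positivity), Real.mul_rpow hq1.le hq2.le,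
          ← Real.rpow_mul hn0.le, ← Real.rpow_mul hlog0.le]
      have hb : Real.log n ^ (2*β*α) ≤ (n:ℝ) ^ (s - α*β) := by
        have h1 : (0:ℝ) ≤ Real.log n ^ (2*β*α) := Real.rpow_nonneg hlog0.le _
        have h2 : (0:ℝ) ≤ (n:ℝ) ^ (s - α*β) := Real.rpow_nonneg hn0.le _
        simpa [Real.norm_eq_abs, abs_of_nonneg h1, abs_of_nonneg h2] using hbd
      have hinv : (n:ℝ) ^ (α*β - s) ≤ Real.log n ^ (-(2*β) * α) := by
        have l1 : Real.log n ^ (-(2*β) * α) = (Real.log n ^ (2*β*α))⁻¹ := by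
          rw [show (-(2*β) * α) = -(2*β*α) by ring, Real.rpow_neg hlog0.le]
        have l2 : (n:ℝ) ^ (α*β - s) = ((n:ℝ) ^ (s - α*β))⁻¹ := by
          rw [show (α*β - s) = -(s - α*β) by ring, Real.rpow_neg hn0.le]
        rw [l1, l2]
        exact inv_anti₀ (Real.rpow_pos_of_pos hlog0 _) hb
      have comb : (n:ℝ) ^ (-s) ≤ (n:ℝ) ^ (-β * α) * Real.log n ^ (-(2*β) * α) := by
        have : (n:ℝ) ^ (-β * α) * (n:ℝ) ^ (α*β - s) = (n:ℝ) ^ (-s) := by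
          rw [← Real.rpow_add hn0]; ring_nf
        rw [← this]
        exact mul_le_mul_of_nonneg_left hinv (Real.rpow_nonneg hn0.le _)
      calc c ^ α * (n:ℝ) ^ (-s) ≤ c ^ α * ((n:ℝ) ^ (-β * α) * Real.log n ^ (-(2*β) * α)) :=
            mul_le_mul_of_nonneg_left comb hcα.le
        _ = (c * ((n:ℝ) ^ (-β) * Real.log n ^ (-(2*β)))) ^ α := e0.symm
        _ ≤ p n ^ α := step1
    rw [if_neg hppos.ne']
    exact ENNReal.ofReal_le_ofReal key
lemma lemC {β : ℝ} (hβ : 1 < β) {p : ℕ → ℝ} (hp0 : ∀ n, 0 ≤ p n)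
    {C c : ℝ} (hC : 0 < C) (hc : 0 < c)
    (hub : ∀ᶠ n : ℕ in atTop, p n ≤ C * ((n:ℝ) ^ (-β) * Real.log n ^ (-(2*β))))
    (hlb : ∀ᶠ n : ℕ in atTop, c * ((n:ℝ) ^ (-β) * Real.log n ^ (-(2*β))) ≤ p n) :
    shannonEntropy p ≠ ∞ := by
  set s : ℝ := (1 + β) / 2 with hs
  set s' : ℝ := (1 + 3*β) / 4 with hs'
  have h1s : 1 < s := by rw [hs]; linarith
  have hss' : s < s' := by rw [hs, hs']; linarith
  have hs'β : s' < β := by rw [hs']; linarith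
  -- eventual upper bound pieces
  have ev1 : ∀ᶠ n : ℕ in atTop, C ≤ (n:ℝ) ^ (β - s') :=
    tendsto_natCast_atTop_atTop.eventually
      ((tendsto_rpow_atTop (by linarith : 0 < β - s')).eventually_ge_atTop C)
  have ev2 : ∀ᶠ n : ℕ in atTop, ‖Real.log (n:ℝ) ^ (2*β)‖ ≤ c * ‖(n:ℝ) ^ (1:ℝ)‖ :=
    tendsto_natCast_atTop_atTop.eventually
      ((isLittleO_log_rpow_rpow_atTop (2*β) one_pos).def hc)
  have ev3 : ∀ᶠ n : ℕ in atTop, ‖Real.log (n:ℝ)‖ ≤ (β+1)⁻¹ * ‖(n:ℝ) ^ (s' - s)‖ :=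
    tendsto_natCast_atTop_atTop.eventually
      ((isLittleO_log_rpow_atTop (by linarith : 0 < s' - s)).def (by positivity))
  apply aux_tsum_ne_top (G := fun n => ENNReal.ofReal ((n:ℝ) ^ (-s)))
    (fun n => ENNReal.ofReal_ne_top)
  · exact aux_ofReal_tsum_ne_top (fun n => Real.rpow_nonneg (Nat.cast_nonneg _) _)
      (Real.summable_nat_rpow.mpr (by linarith))
  · filter_upwards [hub, hlb, aux_ev_log, ev1, ev2, ev3] with n hu hl ⟨hn1, hlog1⟩ h1 h2 h3
    have hn0 : (0:ℝ) < (n:ℝ) := by linarith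
    have hlog0 : (0:ℝ) < Real.log n := by linarith
    apply ENNReal.ofReal_le_ofReal
    -- p n > 0
    have hq1 : (0:ℝ) < (n:ℝ) ^ (-β) := Real.rpow_pos_of_pos hn0 _
    have hq2 : (0:ℝ) < Real.log n ^ (-(2*β)) := Real.rpow_pos_of_pos hlog0 _
    have hppos : 0 < p n := lt_of_lt_of_le (by positivity) hl
    -- upper bound : p n ≤ n^(-s')
    have hub' : p n ≤ (n:ℝ) ^ (-s') := by
      have e1 : Real.log n ^ (-(2*β)) ≤ 1 :=
        Real.rpow_le_one_of_one_le_of_nonpos hlog1 (by linarith)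
      have e2 : C * ((n:ℝ) ^ (-β) * Real.log n ^ (-(2*β))) ≤ C * (n:ℝ) ^ (-β) := by
        calc C * ((n:ℝ) ^ (-β) * Real.log n ^ (-(2*β))) ≤ C * ((n:ℝ) ^ (-β) * 1) :=
            mul_le_mul_of_nonneg_left (mul_le_mul_of_nonneg_left e1 hq1.le) hC.le
          _ = C * (n:ℝ) ^ (-β) := by ring
      have e3 : C * (n:ℝ) ^ (-β) ≤ (n:ℝ) ^ (β - s') * (n:ℝ) ^ (-β) :=
        mul_le_mul_of_nonneg_right h1 hq1.le
      have e4 : (n:ℝ) ^ (β - s') * (n:ℝ) ^ (-β) = (n:ℝ) ^ (-s') := by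
        rw [← Real.rpow_add hn0]; ring_nf
      linarith
    -- lower bound : n^(-(β+1)) ≤ p n
    have hlb' : (n:ℝ) ^ (-(β+1)) ≤ p n := by
      have b1 : Real.log n ^ (2*β) ≤ c * (n:ℝ) := by
        have hx : (0:ℝ) ≤ Real.log n ^ (2*β) := Real.rpow_nonneg hlog0.le _
        have hy : (0:ℝ) ≤ (n:ℝ) := hn0.le
        simpa [Real.norm_eq_abs, abs_of_nonneg hx, Real.rpow_one,
          abs_of_nonneg hy] using h2
      have b2 : (c * (n:ℝ))⁻¹ ≤ Real.log n ^ (-(2*β)) := by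
        rw [show (-(2*β)) = -(2*β) from rfl, Real.rpow_neg hlog0.le]
        exact inv_anti₀ (Real.rpow_pos_of_pos hlog0 _) b1
      have b3 : c * ((n:ℝ) ^ (-β) * (c * (n:ℝ))⁻¹)
          ≤ c * ((n:ℝ) ^ (-β) * Real.log n ^ (-(2*β))) :=
        mul_le_mul_of_nonneg_left (mul_le_mul_of_nonneg_left b2 hq1.le) hc.le
      have b4 : c * ((n:ℝ) ^ (-β) * (c * (n:ℝ))⁻¹) = (n:ℝ) ^ (-(β+1)) := by
        rw [show (-(β+1)) = (-β) + (-1) by ring, Real.rpow_add hn0,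
          Real.rpow_neg_one]
        field_simp
      linarith
    -- p n ≤ 1 and -log p n bounds
    have hp1 : p n ≤ 1 := by
      have : (n:ℝ) ^ (-s') ≤ 1 :=
        Real.rpow_le_one_of_one_le_of_nonpos hn1 (by linarith)
      linarith
    have hlogp_nonneg : 0 ≤ -Real.log (p n) :=
      neg_nonneg.2 (Real.log_nonpos hppos.le hp1)
    have hlogp : -Real.log (p n) ≤ (β+1) * Real.log n := by
      have : Real.log ((n:ℝ) ^ (-(β+1))) ≤ Real.log (p n) :=
        Real.log_le_log (Real.rpow_pos_of_pos hn0 _) hlb'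
      rw [Real.log_rpow hn0] at this
      linarith
    -- combine
    have main : -(p n * Real.log (p n)) ≤ (n:ℝ) ^ (-s') * ((β+1) * Real.log n) := by
      have : -(p n * Real.log (p n)) = p n * (-Real.log (p n)) := by ring
      rw [this]
      exact mul_le_mul hub' hlogp hlogp_nonneg (Real.rpow_nonneg hn0.le _)
    have last : (n:ℝ) ^ (-s') * ((β+1) * Real.log n) ≤ (n:ℝ) ^ (-s) := by
      have c1 : (β+1) * Real.log n ≤ (n:ℝ) ^ (s' - s) := by
        have hx : (0:ℝ) ≤ Real.log n := hlog0.le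
        have hy : (0:ℝ) ≤ (n:ℝ) ^ (s' - s) := Real.rpow_nonneg hn0.le _
        have h3' : Real.log n ≤ (β+1)⁻¹ * (n:ℝ) ^ (s' - s) := by
          simpa [Real.norm_eq_abs, abs_of_nonneg hx, abs_of_nonneg hy] using h3
        have hβ1 : (0:ℝ) < β + 1 := by linarith
        calc (β+1) * Real.log n ≤ (β+1) * ((β+1)⁻¹ * (n:ℝ) ^ (s' - s)) :=
              mul_le_mul_of_nonneg_left h3' hβ1.le
          _ = (n:ℝ) ^ (s' - s) := by field_simp
      calc (n:ℝ) ^ (-s') * ((β+1) * Real.log n) ≤ (n:ℝ) ^ (-s') * (n:ℝ) ^ (s' - s) :=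
            mul_le_mul_of_nonneg_left c1 (Real.rpow_nonneg hn0.le _)
        _ = (n:ℝ) ^ (-s) := by rw [← Real.rpow_add hn0]; ring_nf
    linarith

/-- If `β > 1` and `lim pₙ / (n^{-β} (log n)^{-2β})` exists and
lies in `(0,∞)`, then `α_c(P) = 1/β` and `R(P) = [1/β, ∞)`; in particular
`H_{1/β}(P) < ∞` while `H_α(P) = ∞` for all `0 ≤ α < 1/β`. -/
theorem stmt6 (β : ℝ) (hβ : 1 < β) (p : ℕ → ℝ) (hp : IsProbDist p)
    (L : ℝ) (hL : 0 < L)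
    (hlim : Tendsto
      (fun n : ℕ => p n / ((n : ℝ) ^ (-β) * Real.log n ^ (-(2 * β))))
      atTop (𝓝 L)) :
    criticalExponent p = 1 / β ∧ convRegion p = Set.Ici (1 / β) ∧
    renyiEntropy p (1 / β) < ∞ ∧
    (∀ α : ℝ, 0 ≤ α → α < 1 / β → renyiEntropy p α = ∞) := by
  obtain ⟨hp0, hpsum⟩ := hp
  have hβ0 : (0:ℝ) < β := by linarith
  have h1β : (0:ℝ) < 1/β := by positivity
  have h1β1 : 1/β < 1 := by rw [div_lt_one hβ0]; exact hβ
  have hqpos : ∀ᶠ n : ℕ in atTop, 0 < (n:ℝ) ^ (-β) * Real.log n ^ (-(2*β)) := by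
    filter_upwards [aux_ev_log] with n ⟨hn1, hlog1⟩
    have hn0 : (0:ℝ) < (n:ℝ) := by linarith
    have hlog0 : (0:ℝ) < Real.log n := by linarith
    exact mul_pos (Real.rpow_pos_of_pos hn0 _) (Real.rpow_pos_of_pos hlog0 _)
  have hub : ∀ᶠ n : ℕ in atTop,
      p n ≤ (2*L) * ((n:ℝ) ^ (-β) * Real.log n ^ (-(2*β))) := by
    filter_upwards [hlim.eventually_lt_const (show L < 2*L by linarith), hqpos] with n h hq
    exact le_of_lt ((div_lt_iff₀ hq).1 h)
  have hlb : ∀ᶠ n : ℕ in atTop,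
      (L/2) * ((n:ℝ) ^ (-β) * Real.log n ^ (-(2*β))) ≤ p n := by
    filter_upwards [hlim.eventually_const_lt (show L/2 < L by linarith), hqpos] with n h hq
    exact le_of_lt ((lt_div_iff₀ hq).1 h)
  have hA : ∀ α : ℝ, 1/β ≤ α → renyiSum p α ≠ ∞ :=
    fun α h => lemA hβ hp0 (by linarith : (0:ℝ) < 2*L) hub h
  have hB : ∀ α : ℝ, 0 ≤ α → α < 1/β → renyiSum p α = ∞ :=
    fun α h0 h1 => lemB hβ hp0 (half_pos hL) hlb h0 h1
  have hSh : shannonEntropy p ≠ ∞ := lemC hβ hp0 (by linarith) (half_pos hL) hub hlb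
  have hEnt_top : ∀ α : ℝ, 0 ≤ α → α < 1/β → renyiEntropy p α = ∞ := by
    intro α hα0 hα
    have hα1 : α ≠ 1 := by intro h; rw [h] at hα; linarith
    rw [renyiEntropy, if_neg hα1, if_pos (hB α hα0 hα)]
  have hEnt_fin : ∀ α : ℝ, 1/β ≤ α → renyiEntropy p α < ∞ := by
    intro α hα
    by_cases hα1 : α = 1
    · rw [renyiEntropy, if_pos hα1]
      exact lt_top_iff_ne_top.2 hSh
    · rw [renyiEntropy, if_neg hα1, if_neg (hA α hα)]
      exact ENNReal.ofReal_lt_top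
  have hreg : convRegion p = Set.Ici (1/β) := by
    ext α
    simp only [convRegion, Set.mem_setOf_eq, Set.mem_Ici]
    constructor
    · rintro ⟨hα0, hfin⟩
      by_contra h
      push_neg at h
      rw [hEnt_top α hα0 h] at hfin
      exact lt_irrefl _ hfin
    · intro h
      exact ⟨le_trans h1β.le h, hEnt_fin α h⟩
  refine ⟨?_, hreg, hEnt_fin _ le_rfl, hEnt_top⟩
  rw [criticalExponent, hreg, csInf_Ici]
end

section
/- For every c ∈ [0, 1], the set Γ(c) of probability distributions over the positive integers with critical exponent equal to c is dense in the set Γ of all probability distributions over the positive integers, with respect to the total variation distance: for every P ∈ Γ and every ε > 0 there exists S ∈ Γ(c) with d_TV(P, S) ≤ ε. -/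
open Filter Topology
open scoped ENNReal

lemma tsum_ofReal_ne_top_iff {f : ℕ → ℝ} (hf : ∀ n, 0 ≤ f n) :
    (∑' n, ENNReal.ofReal (f n)) ≠ ⊤ ↔ Summable f := by
  have : ∀ n, ENNReal.ofReal (f n) = ((f n).toNNReal : ℝ≥0∞) := fun n => rfl
  simp_rw [this]
  rw [ENNReal.tsum_coe_ne_top_iff_summable_coe]
  exact summable_congr fun n => by rw [Real.coe_toNNReal _ (hf n)]

lemma tsum_shift_eq {g : ℕ → ℝ≥0∞} (M : ℕ) :
    (∑' n, if n < M then 0 else g (n - M)) = ∑' m, g m := by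
  have hi : Function.Injective (fun m : ℕ => m + M) := add_left_injective M
  have := hi.tsum_eq (f := fun n => if n < M then 0 else g (n - M)) ?_
  · rw [← this]
    congr 1
    funext m
    simp
  · intro n hn
    have hM : ¬ n < M := by
      intro h
      simp [Function.mem_support, h] at hn
    exact ⟨n - M, by simp only []; omega⟩

lemma hasSum_split {a b : ℕ → ℝ} (M : ℕ) {B : ℝ} (hB : HasSum b B) :
    HasSum (fun n => if n < M then a n else b (n - M))
      ((∑ i ∈ Finset.range M, a i) + B) := by
  have h1 : HasSum (fun n => if n < M then a n else 0) (∑ i ∈ Finset.range M, a i) := by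
    have h := hasSum_sum_of_ne_finset_zero (s := Finset.range M) (L := SummationFilter.unconditional ℕ)
      (f := fun n => if n < M then a n else 0) (by
        intro n hn
        simp only [Finset.mem_range] at hn
        simp [hn])
    have he : (∑ i ∈ Finset.range M, if i < M then a i else 0)
        = ∑ i ∈ Finset.range M, a i :=
      Finset.sum_congr rfl (fun i hi => by simp [Finset.mem_range.mp hi])
    rwa [he] at h
  have h2 : HasSum (fun n => if n < M then 0 else b (n - M)) B := by
    have hi : Function.Injective (fun m : ℕ => m + M) := add_left_injective M
    rw [← hi.hasSum_iff (f := fun n => if n < M then 0 else b (n - M)) (by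
      intro n hn
      have hM : n < M := by
        by_contra h
        exact hn ⟨n - M, by simp only []; omega⟩
      simp [hM])]
    convert hB using 1
    funext m
    simp
  have h := h1.add h2
  convert h using 1
  funext n
  by_cases hn : n < M <;> simp [hn]

lemma tsum_split (a b : ℕ → ℝ≥0∞) (M : ℕ) :
    (∑' n, if n < M then a n else b (n - M))
      = (∑ i ∈ Finset.range M, a i) + ∑' m, b m := by
  have hsp : (fun n => if n < M then a n else b (n - M))
      = fun n => (if n < M then a n else 0) + (if n < M then 0 else b (n - M)) := by
    funext n
    by_cases hn : n < M <;> simp [hn]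
  rw [hsp, ENNReal.tsum_add, tsum_shift_eq M]
  congr 1
  rw [tsum_eq_sum (s := Finset.range M) (by
    intro n hn
    simp only [Finset.mem_range] at hn
    simp [hn])]
  exact Finset.sum_congr rfl (fun i hi => by simp [Finset.mem_range.mp hi])



noncomputable def Xf : ℕ → ℝ := fun m => ((m:ℝ)+3) * (Real.log ((m:ℝ)+3))^2

lemma log_ge_one (m : ℕ) : 1 ≤ Real.log ((m:ℝ)+3) := by
  rw [Real.le_log_iff_exp_le (by positivity)]
  calc Real.exp 1 ≤ 2.7182818286 := Real.exp_one_lt_d9.le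
    _ ≤ 3 := by norm_num
    _ ≤ (m:ℝ)+3 := by
          have : (0:ℝ) ≤ m := Nat.cast_nonneg m
          linarith

lemma Xf_pos (m : ℕ) : 0 < Xf m := by
  have h := log_ge_one m
  unfold Xf
  nlinarith

lemma Xf_one_le (m : ℕ) : 1 ≤ Xf m := by
  have h := log_ge_one m
  unfold Xf
  nlinarith

lemma Xf_mono : ∀ ⦃m n : ℕ⦄, m ≤ n → Xf m ≤ Xf n := by
  intro m n hmn
  have hm := log_ge_one m
  have hc : ((m:ℝ)+3) ≤ ((n:ℝ)+3) := by
    have : (m:ℝ) ≤ n := Nat.cast_le.mpr hmn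
    linarith
  have hl : Real.log ((m:ℝ)+3) ≤ Real.log ((n:ℝ)+3) :=
    Real.log_le_log (by positivity) hc
  unfold Xf
  have h2 : Real.log ((m:ℝ)+3)^2 ≤ Real.log ((n:ℝ)+3)^2 := by nlinarith
  nlinarith [log_ge_one n]

lemma Xf_inv_summable : Summable (fun m : ℕ => (Xf m)⁻¹) := by
  rw [← summable_condensed_iff_of_nonneg (fun n => inv_nonneg.mpr (Xf_pos n).le)
    (fun m n hm hmn => by
      have := Xf_mono hmn
      exact inv_anti₀ (Xf_pos m) this)]
  rw [← summable_nat_add_iff 1]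
  have hbound : ∀ k : ℕ, (2:ℝ) ^ (k+1) * (Xf (2 ^ (k+1)))⁻¹
      ≤ ((Real.log 2)^2)⁻¹ * (((k:ℝ)+1)^2)⁻¹ := by
    intro k
    have h2k : ((2:ℕ):ℝ) ^ (k+1) = (2:ℝ)^(k+1) := by push_cast; ring
    have hXge : (2:ℝ)^(k+1) * (((k:ℝ)+1) * Real.log 2)^2 ≤ Xf (2^(k+1)) := by
      unfold Xf
      have hcast : (((2:ℕ)^(k+1) : ℕ):ℝ) = (2:ℝ)^(k+1) := by push_cast; ring
      rw [hcast]
      have h1 : (2:ℝ)^(k+1) ≤ (2:ℝ)^(k+1) + 3 := by linarith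
      have h2 : ((k:ℝ)+1) * Real.log 2 ≤ Real.log ((2:ℝ)^(k+1) + 3) := by
        calc ((k:ℝ)+1) * Real.log 2 = Real.log ((2:ℝ)^(k+1)) := by
              rw [Real.log_pow]; push_cast; ring
          _ ≤ Real.log ((2:ℝ)^(k+1) + 3) := Real.log_le_log (by positivity) h1
      have hnn : 0 ≤ ((k:ℝ)+1) * Real.log 2 := by
        have := Real.log_pos (by norm_num : (1:ℝ) < 2)
        positivity
      have hsq : (((k:ℝ)+1) * Real.log 2)^2 ≤ (Real.log ((2:ℝ)^(k+1) + 3))^2 :=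
        pow_le_pow_left₀ hnn h2 2
      exact mul_le_mul h1 hsq (by positivity) (by positivity)
    have hXpos : 0 < Xf (2^(k+1)) := Xf_pos _
    have hpos2 : (0:ℝ) < (2:ℝ)^(k+1) := by positivity
    have hlog2 : 0 < Real.log 2 := Real.log_pos (by norm_num)
    have hne : (0:ℝ) < (2:ℝ)^(k+1) * (((k:ℝ)+1) * Real.log 2)^2 := by positivity
    calc (2:ℝ)^(k+1) * (Xf (2^(k+1)))⁻¹
        ≤ (2:ℝ)^(k+1) * ((2:ℝ)^(k+1) * (((k:ℝ)+1) * Real.log 2)^2)⁻¹ := by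
          apply mul_le_mul_of_nonneg_left _ (by positivity)
          exact inv_anti₀ hne hXge
      _ = ((Real.log 2)^2)⁻¹ * (((k:ℝ)+1)^2)⁻¹ := by
          field_simp
  apply Summable.of_nonneg_of_le
    (fun k => mul_nonneg (by positivity) (inv_nonneg.mpr (Xf_pos _).le)) hbound
  apply Summable.mul_left
  have := Real.summable_one_div_nat_pow.mpr (le_refl 2)
  have h := (summable_nat_add_iff 1).mpr this
  apply h.congr
  intro k
  push_cast
  rw [one_div]

lemma pos_case (c : ℝ) (hc0 : 0 < c) (hc1 : c ≤ 1) :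
    ∃ q : ℕ → ℝ, (∀ m, 0 ≤ q m) ∧ HasSum q 1 ∧
      (∀ α : ℝ, c < α → α < 1 → Summable (fun m => if q m = 0 then 0 else q m ^ α)) ∧
      (∀ α : ℝ, 0 ≤ α → α < c → ¬ Summable (fun m => if q m = 0 then 0 else q m ^ α)) := by
  set b : ℕ → ℝ := fun m => Xf m ^ (-(1/c)) with hbdef
  have hb0 : ∀ m, 0 < b m := fun m => Real.rpow_pos_of_pos (Xf_pos m) _
  have hoc : 1 ≤ 1/c := by
    rw [le_one_div (by norm_num) hc0]
    simpa using hc1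
  have hbu : ∀ m, b m ≤ (Xf m)⁻¹ := by
    intro m
    have h := Real.rpow_le_rpow_of_exponent_le (Xf_one_le m) (by linarith : -(1/c) ≤ -1)
    rwa [Real.rpow_neg_one] at h
  have hbs : Summable b :=
    Summable.of_nonneg_of_le (fun m => (hb0 m).le) hbu Xf_inv_summable
  set Z : ℝ := ∑' m, b m with hZdef
  have hZ0 : 0 < Z := Summable.tsum_pos hbs (fun m => (hb0 m).le) 0 (hb0 0)
  refine ⟨fun m => Z⁻¹ * b m, fun m => mul_nonneg (inv_nonneg.mpr hZ0.le) (hb0 m).le, ?_, ?_, ?_⟩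
  · have := hbs.hasSum.mul_left Z⁻¹
    rwa [← hZdef, inv_mul_cancel₀ hZ0.ne'] at this
  · -- convergence for c < α < 1
    intro α hcα hα1
    have hq : ∀ m, Z⁻¹ * b m ≠ 0 := fun m => (mul_pos (inv_pos.mpr hZ0) (hb0 m)).ne'
    have hrw : ∀ m, (if Z⁻¹ * b m = 0 then (0:ℝ) else (Z⁻¹ * b m) ^ α)
        = Z⁻¹ ^ α * Xf m ^ (-(α/c)) := by
      intro m
      rw [if_neg (hq m), Real.mul_rpow (by positivity) (hb0 m).le, hbdef]
      congr 1
      rw [← Real.rpow_mul (Xf_pos m).le]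
      congr 1
      ring
    rw [show (fun m => if Z⁻¹ * b m = 0 then (0:ℝ) else (Z⁻¹ * b m) ^ α)
        = fun m => Z⁻¹ ^ α * Xf m ^ (-(α/c)) from funext hrw]
    apply Summable.mul_left
    apply Summable.of_nonneg_of_le
      (fun m => (Real.rpow_pos_of_pos (Xf_pos m) _).le)
      (fun m => ?_) Xf_inv_summable
    have hac : 1 ≤ α/c := by
      rw [le_div_iff₀ hc0]
      linarith
    have h := Real.rpow_le_rpow_of_exponent_le (Xf_one_le m) (by linarith : -(α/c) ≤ -1)
    rwa [Real.rpow_neg_one] at h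
  · -- divergence for 0 ≤ α < c
    intro α hα0 hαc hsum
    have hq : ∀ m, Z⁻¹ * b m ≠ 0 := fun m => (mul_pos (inv_pos.mpr hZ0) (hb0 m)).ne'
    have hrw : ∀ m, (if Z⁻¹ * b m = 0 then (0:ℝ) else (Z⁻¹ * b m) ^ α)
        = Z⁻¹ ^ α * Xf m ^ (-(α/c)) := by
      intro m
      rw [if_neg (hq m), Real.mul_rpow (by positivity) (hb0 m).le, hbdef]
      congr 1
      rw [← Real.rpow_mul (Xf_pos m).le]
      congr 1
      ring
    rw [show (fun m => if Z⁻¹ * b m = 0 then (0:ℝ) else (Z⁻¹ * b m) ^ α)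
        = fun m => Z⁻¹ ^ α * Xf m ^ (-(α/c)) from funext hrw] at hsum
    have hsum2 : Summable (fun m => Xf m ^ (-(α/c))) :=
      (summable_mul_left_iff (by positivity : Z⁻¹ ^ α ≠ 0)).mp hsum
    rcases eq_or_lt_of_le hα0 with h0 | h0
    · -- α = 0 : terms are 1
      rw [show (fun m => Xf m ^ (-(α/c))) = fun _ => (1:ℝ) from funext fun m => by
        rw [← h0]; simp [Real.rpow_zero]] at hsum2
      exact one_ne_zero ((summable_const_iff 1).mp hsum2)
    · -- 0 < α < c
      set t : ℝ := α/c with htdef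
      have ht0 : 0 < t := div_pos h0 hc0
      have ht1 : t < 1 := (div_lt_one hc0).mpr hαc
      set δ : ℝ := (1-t)/(2*t) with hδdef
      have hδ0 : 0 < δ := by
        apply div_pos <;> nlinarith
      have hXle : ∀ m : ℕ, Xf m ≤ δ⁻¹^2 * ((m:ℝ)+3) ^ (1+2*δ) := by
        intro m
        have hlog : Real.log ((m:ℝ)+3) ≤ ((m:ℝ)+3) ^ δ / δ :=
          Real.log_le_rpow_div (by positivity) hδ0
        have hlnn : 0 ≤ Real.log ((m:ℝ)+3) := by linarith [log_ge_one m]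
        have hsq : (Real.log ((m:ℝ)+3))^2 ≤ (((m:ℝ)+3) ^ δ / δ)^2 :=
          pow_le_pow_left₀ hlnn hlog 2
        unfold Xf
        have hA : (0:ℝ) < (m:ℝ)+3 := by positivity
        have hpow : ((m:ℝ)+3) ^ (1+2*δ) = ((m:ℝ)+3) * (((m:ℝ)+3) ^ δ * ((m:ℝ)+3) ^ δ) := by
          rw [show (1+2*δ) = 1 + (δ + δ) by ring, Real.rpow_add hA, Real.rpow_add hA,
            Real.rpow_one]
        calc ((m:ℝ)+3) * (Real.log ((m:ℝ)+3))^2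
            ≤ ((m:ℝ)+3) * (((m:ℝ)+3) ^ δ / δ)^2 := by
              apply mul_le_mul_of_nonneg_left hsq (by positivity)
          _ = δ⁻¹^2 * ((m:ℝ)+3) ^ (1+2*δ) := by
              rw [hpow]
              ring
      have hterm : ∀ m : ℕ, (δ^2) ^ t * ((m:ℝ)+3)⁻¹ ≤ Xf m ^ (-t) := by
        intro m
        have h1 : Xf m ^ (-t) ≥ (δ⁻¹^2 * ((m:ℝ)+3) ^ (1+2*δ)) ^ (-t) :=
          Real.rpow_le_rpow_of_nonpos (Xf_pos m) (hXle m) (by linarith)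
        have h2 : (δ⁻¹^2 * ((m:ℝ)+3) ^ (1+2*δ)) ^ (-t)
            = (δ^2) ^ t * ((m:ℝ)+3)⁻¹ := by
          rw [Real.mul_rpow (by positivity) (by positivity)]
          congr 1
          · rw [inv_pow, Real.inv_rpow (by positivity), Real.rpow_neg (by positivity),
              inv_inv]
          · rw [← Real.rpow_mul (by positivity)]
            have htne : t ≠ 0 := ne_of_gt ht0
            have : (1+2*δ) * (-t) = -1 := by
              rw [hδdef]
              field_simp
              ring
            rw [this, Real.rpow_neg_one]
        rw [← h2]
        exact h1
      have hsum3 : Summable (fun m : ℕ => (δ^2) ^ t * ((m:ℝ)+3)⁻¹) :=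
        Summable.of_nonneg_of_le (fun m => by positivity) hterm hsum2
      have hsum4 : Summable (fun m : ℕ => ((m:ℝ)+3)⁻¹) :=
        (summable_mul_left_iff (by positivity : ((δ:ℝ)^2) ^ t ≠ 0)).mp hsum3
      have hsum5 : Summable (fun m : ℕ => ((m:ℕ):ℝ)⁻¹) := by
        have := (summable_nat_add_iff (f := fun n : ℕ => ((n:ℕ):ℝ)⁻¹) 3).mp ?_
        · exact this
        · apply hsum4.congr
          intro m
          push_cast
          ring
      exact Real.not_summable_natCast_inv hsum5

lemma delta_summable (α : ℝ) :
    Summable (fun m : ℕ => if (if m = 0 then (1:ℝ) else 0) = 0 then 0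
      else (if m = 0 then (1:ℝ) else 0) ^ α) := by
  apply summable_of_finite_support
  apply Set.Finite.subset (Set.finite_singleton 0)
  intro m hm
  simp only [Function.mem_support] at hm
  by_contra h
  simp only [Set.mem_singleton_iff] at h
  simp [h] at hm


private lemma key_lemma (c : ℝ) (hc0 : 0 ≤ c) (hc1 : c ≤ 1)
    (q : ℕ → ℝ) (hq0 : ∀ m, 0 ≤ q m) (hq1 : HasSum q 1)
    (hfin : ∀ α, c < α → α < 1 → Summable (fun m => if q m = 0 then 0 else q m ^ α))
    (hinf : ∀ α, 0 ≤ α → α < c → ¬ Summable (fun m => if q m = 0 then 0 else q m ^ α))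
    (p : ℕ → ℝ) (hp : IsProbDist p) (ε : ℝ) (hε : 0 < ε) :
    ∃ s : ℕ → ℝ, IsProbDist s ∧ criticalExponent s = c ∧ dTV p s ≤ ε := by
  obtain ⟨hp0, hp1⟩ := hp
  -- choose M with small tail
  obtain ⟨M, hM⟩ := Metric.tendsto_atTop.mp hp1.tendsto_sum_nat (ε/4) (by linarith)
  set P : ℝ := ∑ i ∈ Finset.range M, p i with hPdef
  have hP0 : 0 ≤ P := Finset.sum_nonneg fun i _ => hp0 i
  have hP1 : P ≤ 1 := by
    have := sum_le_hasSum (Finset.range M) (fun i _ => hp0 i) hp1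
    simpa using this
  have hPT : 1 - P ≤ ε/4 := by
    have := hM M le_rfl
    rw [Real.dist_eq] at this
    have := abs_lt.mp this
    linarith [this.1]
  set θ : ℝ := min (ε/4) 1 with hθdef
  have hθ0 : 0 < θ := lt_min (by linarith) one_pos
  have hθ1 : θ ≤ 1 := min_le_right _ _
  have hθε : θ ≤ ε/4 := min_le_left _ _
  set η : ℝ := 1 - (1-θ)*P with hηdef
  have hη0 : 0 < η := by nlinarith
  have hηb : η ≤ (1-P) + θ := by nlinarith
  set s : ℕ → ℝ := fun n => if n < M then (1-θ) * p n else η * q (n - M) with hsdef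
  have hs0 : ∀ n, 0 ≤ s n := by
    intro n
    by_cases hn : n < M
    · simp only [hsdef, if_pos hn]
      exact mul_nonneg (by linarith) (hp0 n)
    · simp only [hsdef, if_neg hn]
      exact mul_nonneg hη0.le (hq0 _)
  have hsSum : HasSum s 1 := by
    have h := hasSum_split (a := fun n => (1-θ) * p n) M (hq1.mul_left η)
    have : (∑ i ∈ Finset.range M, (1-θ) * p i) + η * 1 = 1 := by
      rw [← Finset.mul_sum, ← hPdef]
      simp only [mul_one, hηdef]
      ring
    rwa [this] at h
  refine ⟨s, ⟨hs0, hsSum⟩, ?_, ?_⟩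
  · -- critical exponent
    have hq_le1 : ∀ m, q m ≤ 1 := fun m => le_hasSum hq1 m (fun j _ => hq0 j)
    have hnn : ∀ α : ℝ, ∀ m, 0 ≤ (if q m = 0 then 0 else q m ^ α) := by
      intro α m
      by_cases h : q m = 0
      · simp [h]
      · rw [if_neg h]
        exact Real.rpow_nonneg (hq0 m) α
    have hsplitR : ∀ α : ℝ, renyiSum s α
        = (∑ i ∈ Finset.range M,
            (if (1-θ) * p i = 0 then 0 else ENNReal.ofReal (((1-θ) * p i) ^ α)))
          + ∑' m, (if η * q m = 0 then 0 else ENNReal.ofReal ((η * q m) ^ α)) := by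
      intro α
      rw [renyiSum]
      rw [tsum_congr (f := fun n => if s n = 0 then 0 else ENNReal.ofReal (s n ^ α))
        (g := fun n => if n < M then
            (if (1-θ) * p n = 0 then 0 else ENNReal.ofReal (((1-θ) * p n) ^ α))
          else (if η * q (n - M) = 0 then 0 else ENNReal.ofReal ((η * q (n - M)) ^ α)))
        (by intro n; by_cases hn : n < M <;> simp [hsdef, hn])]
      exact tsum_split (fun i => if (1-θ) * p i = 0 then 0 else ENNReal.ofReal (((1-θ) * p i) ^ α)) (fun m => if η * q m = 0 then 0 else ENNReal.ofReal ((η * q m) ^ α)) M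
    have htail : ∀ α : ℝ,
        (∑' m, (if η * q m = 0 then 0 else ENNReal.ofReal ((η * q m) ^ α)))
        = ENNReal.ofReal (η ^ α)
          * ∑' m, (if q m = 0 then 0 else ENNReal.ofReal (q m ^ α)) := by
      intro α
      rw [← ENNReal.tsum_mul_left]
      apply tsum_congr
      intro m
      by_cases hqm : q m = 0
      · simp [hqm]
      · have hqmpos : 0 < q m := lt_of_le_of_ne (hq0 m) (Ne.symm hqm)
        have hne : η * q m ≠ 0 := by positivity
        rw [if_neg hne, if_neg hqm,
          Real.mul_rpow hη0.le (hq0 m), ENNReal.ofReal_mul (Real.rpow_nonneg hη0.le α)]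
    have hhead : ∀ α : ℝ, (∑ i ∈ Finset.range M,
        (if (1-θ) * p i = 0 then 0 else ENNReal.ofReal (((1-θ) * p i) ^ α))) ≠ ⊤ := by
      intro α
      refine (ENNReal.sum_lt_top.mpr fun i _ => ?_).ne
      by_cases h : (1-θ) * p i = 0
      · simp [h]
      · rw [if_neg h]
        exact ENNReal.ofReal_lt_top
    have hIff : ∀ α : ℝ,
        ((∑' m, (if q m = 0 then 0 else ENNReal.ofReal (q m ^ α))) ≠ ⊤
          ↔ Summable (fun m => if q m = 0 then 0 else q m ^ α)) := by
      intro α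
      rw [tsum_congr (g := fun m => ENNReal.ofReal (if q m = 0 then 0 else q m ^ α))
        (by intro m; by_cases h : q m = 0 <;> simp [h])]
      exact tsum_ofReal_ne_top_iff (hnn α)
    have claimA : ∀ α : ℝ, 0 ≤ α → c < α → α ≠ 1 → α ∈ convRegion s := by
      intro α hα0 hαc hα1
      have hsum : Summable (fun m => if q m = 0 then 0 else q m ^ α) := by
        rcases lt_or_ge α 1 with h1 | h1
        · exact hfin α hαc h1
        · apply Summable.of_nonneg_of_le (hnn α) ?_ hq1.summable
          intro m
          by_cases h : q m = 0
          · simp [h, hq0 m]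
          · rw [if_neg h]
            have hqm : 0 < q m := lt_of_le_of_ne (hq0 m) (Ne.symm h)
            calc q m ^ α ≤ q m ^ (1:ℝ) :=
                  Real.rpow_le_rpow_of_exponent_ge hqm (hq_le1 m) h1
              _ = q m := Real.rpow_one _
      have hne : renyiSum s α ≠ ⊤ := by
        rw [hsplitR α, htail α]
        exact ENNReal.add_ne_top.mpr ⟨hhead α,
          ENNReal.mul_ne_top ENNReal.ofReal_ne_top ((hIff α).mpr hsum)⟩
      refine ⟨hα0, ?_⟩
      rw [renyiEntropy, if_neg hα1, if_neg hne]
      exact ENNReal.ofReal_lt_top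
    have claimB : ∀ α : ℝ, 0 ≤ α → α < c → renyiEntropy s α = ⊤ := by
      intro α hα0 hαc
      have hα1 : α ≠ 1 := by intro h; rw [h] at hαc; linarith
      have htop : renyiSum s α = ⊤ := by
        rw [hsplitR α, htail α]
        have hT : (∑' m, (if q m = 0 then 0 else ENNReal.ofReal (q m ^ α))) = ⊤ := by
          by_contra h
          exact hinf α hα0 hαc ((hIff α).mp h)
        rw [hT, ENNReal.mul_top (by
          rw [Ne, ENNReal.ofReal_eq_zero, not_le]
          exact Real.rpow_pos_of_pos hη0 α)]
        simp
      rw [renyiEntropy, if_neg hα1, if_pos htop]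
    have hbdd : BddBelow (convRegion s) := ⟨0, fun a ha => ha.1⟩
    have h2mem : (2:ℝ) ∈ convRegion s := claimA 2 (by norm_num) (by linarith) (by norm_num)
    have hle : c ≤ criticalExponent s := by
      apply le_csInf ⟨2, h2mem⟩
      intro a ha
      by_contra h
      push_neg at h
      obtain ⟨ha1, ha2⟩ := ha
      rw [claimB a ha1 h] at ha2
      exact lt_irrefl ⊤ ha2
    have hge : criticalExponent s ≤ c := by
      apply le_of_forall_pos_le_add
      intro d hd
      by_cases h1 : c + d/2 = 1
      · have hmem := claimA (c + d/4) (by linarith) (by linarith)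
          (by intro h; rw [← h1] at h; linarith)
        exact (csInf_le hbdd hmem).trans (by linarith)
      · have hmem := claimA (c + d/2) (by linarith) (by linarith) h1
        exact (csInf_le hbdd hmem).trans (by linarith)
    exact le_antisymm hge hle
  · -- dTV
    set B1 : ℕ → ℝ := fun n => if n < M then θ * p n else p n with hB1def
    set B2 : ℕ → ℝ := fun n => if n < M then 0 else η * q (n - M) with hB2def
    have hB1sum : Summable B1 := by
      apply Summable.of_nonneg_of_le ?_ ?_ hp1.summable
      · intro n
        by_cases hn : n < M <;> simp only [hB1def, if_pos, if_neg, hn, ite_true, ite_false]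
        · exact mul_nonneg hθ0.le (hp0 n)
        · exact hp0 n
      · intro n
        by_cases hn : n < M <;> simp only [hB1def, if_pos, if_neg, hn, ite_true, ite_false]
        · nlinarith [hp0 n]
        · exact le_refl _
    have hB2 : HasSum B2 η := by
      have h := hasSum_split (a := fun _ => (0:ℝ)) M (hq1.mul_left η)
      simpa using h
    have hv1 : ∑' n, B1 n = θ * P + (1 - P) := by
      have hsplit := Summable.sum_add_tsum_nat_add M hB1sum
      have e1 : (∑ i ∈ Finset.range M, B1 i) = θ * P := by
        rw [hPdef, Finset.mul_sum]
        exact Finset.sum_congr rfl (fun i hi => by simp [hB1def, Finset.mem_range.mp hi])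
      have e2 : (∑' i, B1 (i + M)) = 1 - P := by
        have hc : ∀ i : ℕ, B1 (i + M) = p (i + M) := by
          intro i
          simp [hB1def, Nat.not_lt.mpr (Nat.le_add_left M i)]
        rw [tsum_congr hc]
        have hps := Summable.sum_add_tsum_nat_add M hp1.summable
        rw [hp1.tsum_eq, ← hPdef] at hps
        linarith
      rw [← hsplit, e1, e2]
    have hpt : ∀ n, |p n - s n| ≤ B1 n + B2 n := by
      intro n
      by_cases hn : n < M
      · simp only [hsdef, hB1def, hB2def, if_pos hn]
        have : p n - (1 - θ) * p n = θ * p n := by ring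
        rw [this, abs_of_nonneg (mul_nonneg hθ0.le (hp0 n))]
        linarith
      · simp only [hsdef, hB1def, hB2def, if_neg hn]
        have h := abs_sub (p n) (η * q (n - M))
        rw [abs_of_nonneg (hp0 n), abs_of_nonneg (mul_nonneg hη0.le (hq0 _))] at h
        linarith
    have hda : dTV p s ≤ ∑' n, (B1 n + B2 n) := by
      apply Summable.tsum_le_tsum (h := hpt)
      · exact Summable.of_nonneg_of_le (fun n => abs_nonneg _) hpt (hB1sum.add hB2.summable)
      · exact hB1sum.add hB2.summable
    have hval : ∑' n, (B1 n + B2 n) = (θ * P + (1 - P)) + η := by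
      rw [Summable.tsum_add hB1sum hB2.summable, hv1, hB2.tsum_eq]
    rw [hval] at hda
    nlinarith

/-- For every `c ∈ [0,1]`, the set `Γ(c)` of probability
distributions with critical exponent `c` is dense in the set of all probability
distributions with respect to the total variation distance. -/
theorem stmt9 (c : ℝ) (hc0 : 0 ≤ c) (hc1 : c ≤ 1)
    (p : ℕ → ℝ) (hp : IsProbDist p) (ε : ℝ) (hε : 0 < ε) :
    ∃ s : ℕ → ℝ, IsProbDist s ∧ criticalExponent s = c ∧ dTV p s ≤ ε := by
  rcases eq_or_lt_of_le hc0 with h0 | h0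
  · subst h0
    exact key_lemma 0 le_rfl (by norm_num) (fun m => if m = 0 then (1:ℝ) else 0)
      (fun m => by by_cases h : m = 0 <;> simp [h])
      (hasSum_ite_eq 0 1)
      (fun α _ _ => delta_summable α)
      (fun α hα0 hαc => absurd hαc (not_lt.mpr hα0))
      p hp ε hε
  · obtain ⟨q, hq0, hq1, hfin, hinf⟩ := pos_case c h0 hc1
    exact key_lemma c hc0 hc1 q hq0 hq1 hfin hinf p hp ε hε
end

section
/- For every c ∈ [0, 1], the set Γ(c) of probability distributions over the positive integers with critical exponent equal to c is convex: if P, Q ∈ Γ(c) and λ ∈ (0, 1), then the mixture λP + (1−λ)Q also has critical exponent c. -/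
open Filter Topology
open scoped ENNReal

/-- Comparison lemma for Rényi sums. -/
lemma renyiSum_le_of_le (a b : ℕ → ℝ) (C α : ℝ) (hC : 0 < C) (hα : 0 ≤ α)
    (ha : ∀ n, 0 ≤ a n) (hab : ∀ n, a n ≤ C * b n) :
    renyiSum a α ≤ ENNReal.ofReal (C ^ α) * renyiSum b α := by
  rw [renyiSum, renyiSum, ← ENNReal.tsum_mul_left]
  refine ENNReal.tsum_le_tsum fun n => ?_
  by_cases h : a n = 0
  · simp [h]
  · have ha' : 0 < a n := lt_of_le_of_ne (ha n) (Ne.symm h)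
    have hb' : 0 < b n := by nlinarith [hab n]
    rw [if_neg h, if_neg hb'.ne']
    rw [← ENNReal.ofReal_mul (by positivity)]
    apply ENNReal.ofReal_le_ofReal
    calc a n ^ α ≤ (C * b n) ^ α := Real.rpow_le_rpow (ha n) (hab n) hα
      _ = C ^ α * b n ^ α := Real.mul_rpow hC.le hb'.le

lemma renyiSum_ne_top_of_le (a b : ℕ → ℝ) (C α : ℝ) (hC : 0 < C) (hα : 0 ≤ α)
    (ha : ∀ n, 0 ≤ a n) (hab : ∀ n, a n ≤ C * b n)
    (hb : renyiSum b α ≠ ∞) : renyiSum a α ≠ ∞ := by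
  have := renyiSum_le_of_le a b C α hC hα ha hab
  exact ne_top_of_le_ne_top (ENNReal.mul_ne_top ENNReal.ofReal_ne_top hb) this

/-- For a probability distribution, each mass is at most 1. -/
lemma mass_le_one {p : ℕ → ℝ} (hp : IsProbDist p) (n : ℕ) : p n ≤ 1 :=
  le_hasSum hp.2 n fun j _ => hp.1 j

/-- Monotonicity: if the Rényi sum converges at α it converges at any β ≥ α. -/
lemma renyiSum_mono {p : ℕ → ℝ} (hp : IsProbDist p) {α β : ℝ} (hαβ : α ≤ β)
    (h : renyiSum p α ≠ ∞) : renyiSum p β ≠ ∞ := by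
  refine ne_top_of_le_ne_top h (ENNReal.tsum_le_tsum fun n => ?_)
  by_cases hn : p n = 0
  · simp [hn]
  · have h0 : 0 < p n := lt_of_le_of_ne (hp.1 n) (Ne.symm hn)
    rw [if_neg hn, if_neg hn]
    exact ENNReal.ofReal_le_ofReal
      (Real.rpow_le_rpow_of_exponent_ge h0 (mass_le_one hp n) hαβ)

/-- For a probability distribution, the Rényi sum at α ≥ 1 converges. -/
lemma renyiSum_ne_top_of_one_le {p : ℕ → ℝ} (hp : IsProbDist p) {α : ℝ}
    (hα : 1 ≤ α) : renyiSum p α ≠ ∞ := by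
  refine ne_top_of_le_ne_top (b := ∑' n, ENNReal.ofReal (p n))
    ?_ (ENNReal.tsum_le_tsum fun n => ?_)
  · rw [← ENNReal.ofReal_tsum_of_nonneg hp.1 hp.2.summable, hp.2.tsum_eq]
    exact ENNReal.ofReal_ne_top
  · by_cases hn : p n = 0
    · simp [hn]
    · have h0 : 0 < p n := lt_of_le_of_ne (hp.1 n) (Ne.symm hn)
      rw [if_neg hn]
      refine ENNReal.ofReal_le_ofReal ?_
      calc p n ^ α ≤ p n ^ (1:ℝ) :=
            Real.rpow_le_rpow_of_exponent_ge h0 (mass_le_one hp n) hα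
        _ = p n := Real.rpow_one _

/-- For α ≥ 0 with α ≠ 1, membership in the convergence region is equivalent
to convergence of the Rényi sum. -/
lemma mem_convRegion_iff {p : ℕ → ℝ} {α : ℝ} (hα : 0 ≤ α) (hα1 : α ≠ 1) :
    α ∈ convRegion p ↔ renyiSum p α ≠ ∞ := by
  simp only [convRegion, Set.mem_setOf_eq, renyiEntropy, if_neg hα1]
  constructor
  · rintro ⟨-, h⟩
    intro htop
    rw [if_pos htop] at h
    exact (lt_irrefl _ h).elim
  · intro h
    exact ⟨hα, by rw [if_neg h]; exact ENNReal.ofReal_lt_top⟩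

/-- Every α > 1 is in the convergence region of a probability distribution. -/
lemma mem_convRegion_of_one_lt {p : ℕ → ℝ} (hp : IsProbDist p) {α : ℝ}
    (hα : 1 < α) : α ∈ convRegion p :=
  (mem_convRegion_iff (by linarith) (by linarith)).mpr
    (renyiSum_ne_top_of_one_le hp hα.le)

lemma convRegion_bddBelow (p : ℕ → ℝ) : BddBelow (convRegion p) :=
  ⟨0, fun _ h => h.1⟩

/-- For every `c ∈ [0,1]`, the set `Γ(c)` is convex: a mixture
`λP + (1-λ)Q` of two distributions with critical exponent `c` again has
critical exponent `c`. -/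
theorem stmt10 (c : ℝ) (hc0 : 0 ≤ c) (hc1 : c ≤ 1)
    (p q : ℕ → ℝ) (hp : IsProbDist p) (hq : IsProbDist q)
    (hpc : criticalExponent p = c) (hqc : criticalExponent q = c)
    (lam : ℝ) (hlam0 : 0 < lam) (hlam1 : lam < 1) :
    criticalExponent (fun n => lam * p n + (1 - lam) * q n) = c := by
  set m : ℕ → ℝ := fun n => lam * p n + (1 - lam) * q n with hm_def
  have hlam1' : 0 < 1 - lam := by linarith
  have hm : IsProbDist m := by
    constructor
    · intro n; have := hp.1 n; have := hq.1 n; positivity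
    · have := (hp.2.mul_left lam).add (hq.2.mul_left (1 - lam))
      simpa using this
  -- mixture sum finite → p sum finite (and q)
  have hmp : ∀ α : ℝ, 0 ≤ α → renyiSum m α ≠ ∞ → renyiSum p α ≠ ∞ := by
    intro α hα h
    refine renyiSum_ne_top_of_le p m lam⁻¹ α (by positivity) hα hp.1 (fun n => ?_) h
    have hq' := hq.1 n
    have hmn : m n = lam * p n + (1 - lam) * q n := rfl
    rw [hmn, le_inv_mul_iff₀ hlam0]
    nlinarith
  have hmq : ∀ α : ℝ, 0 ≤ α → renyiSum m α ≠ ∞ → renyiSum q α ≠ ∞ := by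
    intro α hα h
    refine renyiSum_ne_top_of_le q m (1-lam)⁻¹ α (by positivity) hα hq.1 (fun n => ?_) h
    have hp' := hp.1 n
    have hmn : m n = lam * p n + (1 - lam) * q n := rfl
    rw [hmn, le_inv_mul_iff₀ hlam1']
    nlinarith
  -- p and q sums finite → mixture sum finite
  have hpqm : ∀ α : ℝ, 0 ≤ α → renyiSum p α ≠ ∞ → renyiSum q α ≠ ∞ →
      renyiSum m α ≠ ∞ := by
    intro α hα h1 h2
    refine ne_top_of_le_ne_top (ENNReal.add_ne_top.mpr ⟨h1, h2⟩) ?_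
    rw [renyiSum, renyiSum, renyiSum, ← ENNReal.tsum_add]
    refine ENNReal.tsum_le_tsum fun n => ?_
    by_cases hn : m n = 0
    · simp [hn]
    · have hm0 : 0 < m n := lt_of_le_of_ne (hm.1 n) (Ne.symm hn)
      have hmax : m n ≤ max (p n) (q n) := by
        rcases max_cases (p n) (q n) with ⟨h, h'⟩ | ⟨h, h'⟩ <;>
          simp only [hm_def, h] <;> nlinarith [hp.1 n, hq.1 n]
      rw [if_neg hn]
      rcases max_choice (p n) (q n) with h | h
      · have hp0 : p n ≠ 0 := by rw [h] at hmax; intro h0; rw [h0] at hmax; linarith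
        refine le_add_of_le_of_nonneg ?_ zero_le
        rw [if_neg hp0]
        exact ENNReal.ofReal_le_ofReal
          (Real.rpow_le_rpow (hm.1 n) (by rw [← h]; exact hmax) hα)
      · have hq0 : q n ≠ 0 := by rw [h] at hmax; intro h0; rw [h0] at hmax; linarith
        refine le_add_of_nonneg_of_le zero_le ?_
        rw [if_neg hq0]
        exact ENNReal.ofReal_le_ofReal
          (Real.rpow_le_rpow (hm.1 n) (by rw [← h]; exact hmax) hα)
  have hMne : (convRegion m).Nonempty := ⟨2, mem_convRegion_of_one_lt hm (by norm_num)⟩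
  have hAne : (convRegion p).Nonempty := ⟨2, mem_convRegion_of_one_lt hp (by norm_num)⟩
  have hBne : (convRegion q).Nonempty := ⟨2, mem_convRegion_of_one_lt hq (by norm_num)⟩
  rw [criticalExponent]
  apply le_antisymm
  · -- sInf M ≤ c
    by_contra hcon
    push_neg at hcon
    rcases lt_or_ge c 1 with hclt | hcge
    · -- pick β in (c, min 1 (sInf M))
      set β : ℝ := min ((c + sInf (convRegion m)) / 2) ((c + 1) / 2) with hβ_def
      have hβc : c < β := by
        apply lt_min <;> linarith
      have hβ1 : β < 1 := lt_of_le_of_lt (min_le_right _ _) (by linarith)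
      have hβM : β < sInf (convRegion m) :=
        lt_of_le_of_lt (min_le_left _ _) (by linarith)
      have hβ0 : 0 ≤ β := le_of_lt (lt_of_le_of_lt hc0 hβc)
      -- find a ∈ convRegion p with a < β
      have hpc' : sInf (convRegion p) = c := hpc
      have hqc' : sInf (convRegion q) = c := hqc
      obtain ⟨a, haA, haβ⟩ := exists_lt_of_csInf_lt (α := ℝ) hAne (hpc' ▸ hβc : sInf (convRegion p) < β)
      obtain ⟨b, hbB, hbβ⟩ := exists_lt_of_csInf_lt (α := ℝ) hBne (hqc' ▸ hβc : sInf (convRegion q) < β)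
      have hpβ : renyiSum p β ≠ ∞ := by
        have ha1 : a ≠ 1 := by intro h; rw [h] at haβ; linarith
        exact renyiSum_mono hp haβ.le ((mem_convRegion_iff haA.1 ha1).mp haA)
      have hqβ : renyiSum q β ≠ ∞ := by
        have hb1 : b ≠ 1 := by intro h; rw [h] at hbβ; linarith
        exact renyiSum_mono hq hbβ.le ((mem_convRegion_iff hbB.1 hb1).mp hbB)
      have hβM' : β ∈ convRegion m :=
        (mem_convRegion_iff hβ0 (by linarith)).mpr (hpqm β hβ0 hpβ hqβ)
      exact absurd (csInf_le (convRegion_bddBelow m) hβM') (not_le.mpr hβM)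
    · -- c = 1
      have hc1' : c = 1 := le_antisymm hc1 hcge
      set β : ℝ := (1 + sInf (convRegion m)) / 2 with hβ_def
      have hβ1 : 1 < β := by rw [hc1'] at hcon; simp only [hβ_def]; linarith
      have hβM : β < sInf (convRegion m) := by
        rw [hc1'] at hcon; simp only [hβ_def]; linarith
      exact absurd (csInf_le (convRegion_bddBelow m) (mem_convRegion_of_one_lt hm hβ1))
        (not_le.mpr hβM)
  · -- c ≤ sInf M
    refine le_csInf hMne fun β hβ => ?_
    rcases lt_or_ge β 1 with hβ1 | hβ1
    · have hβS : renyiSum m β ≠ ∞ :=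
        (mem_convRegion_iff hβ.1 (ne_of_lt hβ1)).mp hβ
      have : β ∈ convRegion p :=
        (mem_convRegion_iff hβ.1 (ne_of_lt hβ1)).mpr (hmp β hβ.1 hβS)
      calc c = sInf (convRegion p) := hpc.symm
        _ ≤ β := csInf_le (convRegion_bddBelow p) this
    · linarith
end
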